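/- Let P and P' be machine processes of the NFB translation. If P ==tau==> P' and WkObs(P) = WkObs(P'), then P and P' are barbed equivalent w.r.t. H. -/

import Mathlib

/-! ### HOcore: syntax, LTS, barbs, barbed bisimilarity -/

/-- Channel names of HOcore. -/
abbrev Name := ℕ

/-- HOcore processes, with de Bruijn indices for process variables. -/
inductive Proc : Type
  | nil : Proc
  | pvar : ℕ → Proc
  | par : Proc → Proc → Proc
  | inp : Name → Proc → Proc
  | out : Name → Proc → Proc
  deriving DecidableEq

namespace Proc

/-- Shift the free de Bruijn indices `≥ k` by `d`. -/
def lift (d : ℕ) : ℕ → Proc → Proc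
  | _, nil => nil
  | k, pvar n => if n < k then pvar n else pvar (n + d)
  | k, par P Q => par (lift d k P) (lift d k Q)
  | k, inp a P => inp a (lift d (k + 1) P)
  | k, out a P => out a (lift d k P)

/-- Capture-avoiding substitution of `S` for the de Bruijn index `k` in `P`. -/
def subst : Proc → ℕ → Proc → Proc
  | nil, _, _ => nil
  | pvar n, k, S => if n = k then lift k 0 S else if k < n then pvar (n - 1) else pvar n
  | par P Q, k, S => par (subst P k S) (subst Q k S)
  | inp a P, k, S => inp a (subst P (k + 1) S)
  | out a P, k, S => out a (subst P k S)

/-- Free channel names of a process. -/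
def fnames : Proc → Finset Name
  | nil => ∅
  | pvar _ => ∅
  | par P Q => fnames P ∪ fnames Q
  | inp a P => insert a (fnames P)
  | out a P => insert a (fnames P)

end Proc

/-- Labels of the HOcore LTS: internal step, output, input. -/
inductive Label
  | tau : Label
  | outl : Name → Proc → Label
  | inl : Name → Proc → Label

/-- Structural congruence: parallel composition is associative, commutative,
and has `nil` as a neutral element. -/
inductive SCong : Proc → Proc → Prop
  | refl (P) : SCong P P
  | symm {P Q} : SCong P Q → SCong Q P
  | trans {P Q R} : SCong P Q → SCong Q R → SCong P R
  | parComm (P Q) : SCong (.par P Q) (.par Q P)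
  | parAssoc (P Q R) : SCong (.par (.par P Q) R) (.par P (.par Q R))
  | parNil (P) : SCong (.par P .nil) P
  | parCong {P P' Q Q'} : SCong P P' → SCong Q Q' → SCong (.par P Q) (.par P' Q')
  | inpCong {P P'} (a) : SCong P P' → SCong (.inp a P) (.inp a P')
  | outCong {P P'} (a) : SCong P P' → SCong (.out a P) (.out a P')

/-- The labeled transition system of HOcore (processes are considered up to
structural congruence). -/
inductive Step : Proc → Label → Proc → Prop
  | outS (a P) : Step (.out a P) (.outl a P) .nil
  | inpS (a Q P) : Step (.inp a Q) (.inl a P) (Q.subst 0 P)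
  | parL {P l P'} (Q) : Step P l P' → Step (.par P Q) l (.par P' Q)
  | parR {Q l Q'} (P) : Step Q l Q' → Step (.par P Q) l (.par P Q')
  | comm1 {P Q P' Q' a R} : Step P (.outl a R) P' → Step Q (.inl a R) Q' →
      Step (.par P Q) .tau (.par P' Q')
  | comm2 {P Q P' Q' a R} : Step P (.inl a R) P' → Step Q (.outl a R) Q' →
      Step (.par P Q) .tau (.par P' Q')
  | struct {P P' l Q Q'} : SCong P P' → Step P' l Q' → SCong Q' Q → Step P l Q

/-- One internal step. -/
def TauStep (P Q : Proc) : Prop := Step P Label.tau Q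

/-- Weak internal transition `==tau==>`. -/
def WTau : Proc → Proc → Prop := Relation.ReflTransGen TauStep

/-- Observables: input on a name, or output on a name (a coname). -/
inductive Barb
  | inb : Name → Barb
  | outb : Name → Barb
  deriving DecidableEq

/-- Strong observable action w.r.t. a set `H` of hidden names. -/
def StrongBarb (H : Set Name) (P : Proc) : Barb → Prop
  | .inb a => a ∉ H ∧ ∃ Q R, Step P (Label.inl a Q) R
  | .outb a => a ∉ H ∧ ∃ Q R, Step P (Label.outl a Q) R

/-- Weak observable action w.r.t. a set `H` of hidden names. -/
def WeakBarb (H : Set Name) (P : Proc) (α : Barb) : Prop :=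
  ∃ P', WTau P P' ∧ StrongBarb H P' α

/-- Barbed bisimulation w.r.t. the hidden names `H`. -/
def IsBarbedBisim (H : Set Name) (R : Proc → Proc → Prop) : Prop :=
  Symmetric R ∧ ∀ P Q, R P Q →
    (∀ α, StrongBarb H P α → WeakBarb H Q α) ∧
    (∀ S : Proc, ((S.fnames : Set Name) ∩ H = ∅) → R (.par P S) (.par Q S)) ∧
    (∀ P', Step P Label.tau P' → ∃ Q', WTau Q Q' ∧ R P' Q')

/-- Barbed equivalence w.r.t. the hidden names `H`. -/
def BarbedEquiv (H : Set Name) (P Q : Proc) : Prop :=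
  ∃ R, IsBarbedBisim H R ∧ R P Q
/-! ### Open call-by-name lambda-terms (free variables are natural numbers)
and the KAM -/

/-- Lambda-terms: free variables `fvar f` (natural numbers) and bound variables
in de Bruijn representation. -/
inductive Term
  | fvar : ℕ → Term
  | bvar : ℕ → Term
  | lam : Term → Term
  | app : Term → Term → Term
  deriving DecidableEq

namespace Term

/-- Shift the de Bruijn indices `≥ k` by `d`. -/
def liftT (d : ℕ) : ℕ → Term → Term
  | _, fvar f => fvar f
  | k, bvar n => if n < k then bvar n else bvar (n + d)
  | k, lam t => lam (liftT d (k + 1) t)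
  | k, app t s => app (liftT d k t) (liftT d k s)

/-- Capture-avoiding substitution of `s` for the de Bruijn index `k`. -/
def substT : Term → ℕ → Term → Term
  | fvar f, _, _ => fvar f
  | bvar n, k, s => if n = k then liftT k 0 s else if k < n then bvar (n - 1) else bvar n
  | lam t, k, s => lam (substT t (k + 1) s)
  | app t u, k, s => app (substT t k s) (substT u k s)

/-- Free variables of a term. -/
def fv : Term → Finset ℕ
  | fvar f => {f}
  | bvar _ => ∅
  | lam t => fv t
  | app t s => fv t ∪ fv s

end Term

/-- Stacks of the KAM. -/
inductive Stack
  | nil : Stack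
  | cons : Term → Stack → Stack

/-- Configurations of the KAM. -/
structure KConf where
  t : Term
  π : Stack

/-- Transitions of the KAM. -/
inductive KStep : KConf → KConf → Prop
  | push {t s π} : KStep ⟨.app t s, π⟩ ⟨t, .cons s π⟩
  | grab {t s π} : KStep ⟨.lam t, .cons s π⟩ ⟨t.substT 0 s, π⟩

/-- Reflexive-transitive closure of KAM transitions. -/
def KSteps : KConf → KConf → Prop := Relation.ReflTransGen KStep
/-! ### The NFB machine -/

/-- Flags of the NFB machine: `lam`, `done`, `enter`, `skip` and free variables
(natural numbers). -/
inductive NFlag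
  | flam | fdone | fenter | fskip
  | fvarF : ℕ → NFlag
  deriving DecidableEq

/-- Labels of the NFB machine: `tau` or a flag. -/
inductive MLabel
  | tau : MLabel
  | flag : NFlag → MLabel

/-- Configurations of the NFB machine: evaluation mode `<t | π | n>_ev` and
continuation mode `<π | n>_cont`. -/
inductive NConf
  | ev : Term → Stack → ℕ → NConf
  | cont : Stack → ℕ → NConf

/-- Labeled transitions of the NFB machine. -/
inductive NStep : NConf → MLabel → NConf → Prop
  | push {t s π n} : NStep (.ev (.app t s) π n) .tau (.ev t (.cons s π) n)
  | grab {t s π n} : NStep (.ev (.lam t) (.cons s π) n) .tau (.ev (t.substT 0 s) π n)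
  | lambda {t n} : NStep (.ev (.lam t) .nil n) (.flag .flam)
      (.ev (t.substT 0 (.fvar n)) .nil (n + 1))
  | var {f π n} : NStep (.ev (.fvar f) π n) (.flag (.fvarF f)) (.cont π n)
  | enter {t π n} : NStep (.cont (.cons t π) n) (.flag .fenter) (.ev t .nil n)
  | skip {t π n} : NStep (.cont (.cons t π) n) (.flag .fskip) (.cont π n)

/-- Terminating flagged transitions of the NFB machine (no target configuration). -/
inductive NFinal : NConf → NFlag → Prop
  | done {n} : NFinal (.cont .nil n) .fdone

/-- Silent transitions of the NFB machine. -/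
def NTau (C C' : NConf) : Prop := NStep C .tau C'

/-- Flagged transitions of the NFB machine. -/
def NFlagStep (C : NConf) (F : NFlag) (C' : NConf) : Prop := NStep C (.flag F) C'
/-! ### Translation of the NFB machine into HOcore -/

def hdN : Name := 0
def cN : Name := 1
def bN : Name := 2
def kN : Name := 3
def sucN : Name := 4
def zN : Name := 5
def initN : Name := 6
def recN : Name := 7
def chN : Name := 8
def lamN : Name := 9
def enterN : Name := 10
def skipN : Name := 11
def doneN : Name := 12

/-- Translation of the empty stack: `[[ [] ]] = b(x).x`. -/
def trMt : Proc := .inp bN (.pvar 0)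

/-- Translation `<<f>>` of a free variable (also used for the counter):
`<<0>> = z(_).init!<0>` and `<<f+1>> = suc(_).<<f>>`. -/
def trFV : ℕ → Proc
  | 0 => .inp zN (.out initN .nil)
  | f + 1 => .inp sucN (trFV f)

/-- `Restart = lam(_).k(x).(hd!<x> || k!<suc(_).x> || c!<[[ [] ]]> || b!<0>)`. -/
def Restart : Proc :=
  .inp lamN (.inp kN (.par (.out hdN (.pvar 0))
    (.par (.out kN (.inp sucN (.pvar 1)))
      (.par (.out cN trMt) (.out bN .nil)))))

/-- Internal choice `P + Q = ch!<P> || ch!<Q> || ch(x).ch(_).x`. -/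
def choicePlus (P Q : Proc) : Proc :=
  .par (.out chN P) (.par (.out chN Q) (.inp chN (.inp chN (.pvar 1))))

/-- `Choice(P) = enter(_).c(_).(P || c!<[[ [] ]]>) + skip(_).init!<0>`. -/
def Choice (P : Proc) : Proc :=
  choicePlus (.inp enterN (.inp cN (.par (P.lift 2 0) (.out cN trMt))))
    (.inp skipN (.out initN .nil))

/-- `Cont = c(p).(p || b!<done(_).0> || hd(x).b(_).Choice(x))`. -/
def ContP : Proc :=
  .inp cN (.par (.pvar 0)
    (.par (.out bN (.inp doneN .nil))
      (.inp hdN (.inp bN (Choice (.pvar 1))))))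

/-- `Rec = init(_).rec(x).(x || rec!<x> || Cont)`. -/
def RecP : Proc :=
  .inp initN (.inp recN (.par (.pvar 0) (.par (.out recN (.pvar 0)) ContP)))

/-- Translation of NFB terms into HOcore. -/
def trTN : Term → Proc
  | .fvar f => trFV f
  | .bvar n => .pvar n
  | .app t s =>
      .inp cN (.par ((trTN t).lift 1 0)
        (.out cN (.par (.out hdN ((trTN s).lift 1 0)) (.out cN (.pvar 0)))))
  | .lam t =>
      .inp cN (.par (.pvar 0)
        (.par (.out bN Restart)
          (.inp hdN (.inp bN (((trTN t).lift 1 0).lift 1 2)))))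

/-- Translation of stacks. -/
def trStkN : Stack → Proc
  | .nil => trMt
  | .cons t π => .par (.out hdN (trTN t)) (.out cN (trStkN π))

/-- Translation of NFB machine configurations. -/
def trNConf : NConf → Proc
  | .ev t π n =>
      .par (trTN t) (.par (.out cN (trStkN π))
        (.par (.out kN (trFV n)) (.par RecP (.out recN RecP))))
  | .cont π n =>
      .par (.out cN (trStkN π)) (.par (.out kN (trFV n))
        (.par ContP (.par RecP (.out recN RecP))))

/-- A machine process is a weak tau-derivative of a translated configuration. -/
def MachineProc (P : Proc) : Prop := ∃ C : NConf, WTau (trNConf C) P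

/-- The flag names. -/
def FlagNames : Set Name := {lamN, enterN, skipN, doneN, sucN, zN}

/-- The hidden names: names of the translation that are not flag names. -/
def HSet : Set Name := {hdN, cN, bN, kN, initN, recN, chN}

/-- Weak observable actions of a process w.r.t. `HSet`. -/
def WkObs (P : Proc) : Set Barb := {α | WeakBarb HSet P α}

/-- The choice process reachable from `[[<t::π | n>_cont]]`. -/
def ChoiceConfig (t : Term) (π : Stack) (n : ℕ) : Proc :=
  .par (Choice (trTN t)) (.par (.out cN (trStkN π))
    (.par (.out kN (trFV n)) (.par RecP (.out recN RecP))))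

/-- Choice processes (up to structural congruence). -/
def IsChoiceProc (P : Proc) : Prop :=
  ∃ t π n, SCong P (ChoiceConfig t π n) ∧ WTau (trNConf (.cont (.cons t π) n)) P

/-- An input transition on the name `a`. -/
def inpStep (a : Name) (P Q : Proc) : Prop := ∃ R, Step P (Label.inl a R) Q

/-- `n` successive input transitions on `suc`. -/
def sucSeq : ℕ → Proc → Proc → Prop
  | 0, P, Q => P = Q
  | f + 1, P, Q => ∃ P', inpStep sucN P P' ∧ sucSeq f P' Q

/-- Process-level transition corresponding to a machine flag: a transition on
the corresponding flag name; for a free variable `f`, `f` transitions on `suc`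
followed by one on `z`. -/
def FlagStepP : NFlag → Proc → Proc → Prop
  | .flam => inpStep lamN
  | .fenter => inpStep enterN
  | .fskip => inpStep skipN
  | .fdone => inpStep doneN
  | .fvarF f => fun P Q => ∃ P', sucSeq f P P' ∧ inpStep zN P' Q

/-- Process-level transition for a machine label (`tau` or a flag). -/
def MLStepP : MLabel → Proc → Proc → Prop
  | .tau => fun P Q => Step P Label.tau Q
  | .flag F => FlagStepP F

/-- Weak process-level machine-labeled transition. -/
def WMLStepP (l : MLabel) (P Q : Proc) : Prop :=
  ∃ P1 P2, WTau P P1 ∧ MLStepP l P1 P2 ∧ WTau P2 Q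

/-! ### Auxiliary development -/

namespace BEq8

open Proc

/-- Raw thread list of a process. -/
def tl : Proc → List Proc
  | .nil => []
  | .pvar n => [.pvar n]
  | .par P Q => tl P ++ tl Q
  | .inp a P => [.inp a P]
  | .out a P => [.out a P]

/-- Thread multiset. -/
def tms (P : Proc) : Multiset Proc := (tl P : Multiset Proc)

@[simp] lemma tms_nil : tms .nil = 0 := rfl
@[simp] lemma tms_pvar (n : ℕ) : tms (.pvar n) = {Proc.pvar n} := rfl
@[simp] lemma tms_par (P Q : Proc) : tms (.par P Q) = tms P + tms Q := by
  simp [tms, tl]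
@[simp] lemma tms_inp (a : Name) (P : Proc) : tms (.inp a P) = {Proc.inp a P} := rfl
@[simp] lemma tms_out (a : Name) (P : Proc) : tms (.out a P) = {Proc.out a P} := rfl

/-- A thread is a non-`par`, non-`nil` process. -/
def IsThread : Proc → Prop
  | .par _ _ => False
  | .nil => False
  | _ => True

lemma tl_threads : ∀ (P : Proc), ∀ x ∈ tl P, IsThread x := by
  intro P
  induction P with
  | nil => simp [tl]
  | pvar n => simp [tl, IsThread]
  | par P Q ihP ihQ =>
      intro x hx
      rcases List.mem_append.1 hx with h | h
      · exact ihP x h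
      · exact ihQ x h
  | inp a P ih => simp [tl, IsThread]
  | out a P ih => simp [tl, IsThread]

lemma tms_threads {P : Proc} : ∀ x ∈ tms P, IsThread x := by
  intro x hx
  exact tl_threads P x (by simpa [tms] using hx)

/-- Relation between threads: same head, structurally congruent bodies. -/
inductive TR : Proc → Proc → Prop
  | pvar (n : ℕ) : TR (.pvar n) (.pvar n)
  | inp {P Q : Proc} (a : Name) : SCong P Q → TR (.inp a P) (.inp a Q)
  | out {P Q : Proc} (a : Name) : SCong P Q → TR (.out a P) (.out a Q)

lemma TR.rfl' {x : Proc} (h : IsThread x) : TR x x := by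
  cases x with
  | pvar n => exact TR.pvar n
  | inp a P => exact TR.inp a (SCong.refl P)
  | out a P => exact TR.out a (SCong.refl P)
  | nil => exact absurd h (by simp [IsThread])
  | par P Q => exact absurd h (by simp [IsThread])

lemma TR.symm' {x y : Proc} (h : TR x y) : TR y x := by
  cases h with
  | pvar n => exact TR.pvar n
  | inp a h => exact TR.inp a h.symm
  | out a h => exact TR.out a h.symm

lemma TR.trans' {x y z : Proc} (h1 : TR x y) (h2 : TR y z) : TR x z := by
  cases h1 with
  | pvar n => exact h2
  | inp a h => cases h2 with
      | inp _ h' => exact TR.inp a (h.trans h')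
  | out a h => cases h2 with
      | out _ h' => exact TR.out a (h.trans h')

instance : IsTrans Proc TR := ⟨fun _ _ _ => TR.trans'⟩

lemma TR.toSCong {x y : Proc} (h : TR x y) : SCong x y := by
  cases h with
  | pvar n => exact SCong.refl _
  | inp a h => exact SCong.inpCong a h
  | out a h => exact SCong.outCong a h

lemma rel_tms_refl (P : Proc) : Multiset.Rel TR (tms P) (tms P) :=
  Multiset.rel_refl_of_refl_on (fun x hx => TR.rfl' (tms_threads x hx))

lemma rel_refl_of_threads {m : Multiset Proc} (h : ∀ x ∈ m, IsThread x) :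
    Multiset.Rel TR m m :=
  Multiset.rel_refl_of_refl_on (fun x hx => TR.rfl' (h x hx))

lemma rel_symm {m m' : Multiset Proc} (h : Multiset.Rel TR m m') :
    Multiset.Rel TR m' m := by
  have := Multiset.rel_flip.2 h
  exact this.mono (fun a _ b _ hab => TR.symm' hab)

/-- Structural congruence induces `TR`-relatedness of thread multisets. -/
lemma scong_rel {P Q : Proc} (h : SCong P Q) : Multiset.Rel TR (tms P) (tms Q) := by
  induction h with
  | refl P => exact rel_tms_refl P
  | symm _ ih => exact rel_symm ih
  | trans _ _ ih1 ih2 => exact ih1.trans TR ih2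
  | parComm P Q =>
      simp only [tms_par]
      rw [add_comm]
      exact rel_refl_of_threads (fun x hx => by
        rcases Multiset.mem_add.1 hx with h | h
        exacts [tms_threads x h, tms_threads x h])
  | parAssoc P Q R =>
      simp only [tms_par, add_assoc]
      exact rel_refl_of_threads (fun x hx => by
        rcases Multiset.mem_add.1 hx with h | h
        · exact tms_threads x h
        · rcases Multiset.mem_add.1 h with h' | h'
          exacts [tms_threads x h', tms_threads x h'])
  | parNil P =>
      simp only [tms_par, tms_nil, add_zero]
      exact rel_refl_of_threads (fun x hx => tms_threads x hx)
  | parCong _ _ ih1 ih2 => simp only [tms_par]; exact ih1.add ih2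
  | inpCong a h ih =>
      simp only [tms_inp, Multiset.singleton_eq_cons_iff]
      exact Multiset.Rel.cons (TR.inp a h) Multiset.Rel.zero
  | outCong a h ih =>
      exact Multiset.Rel.cons (TR.out a h) Multiset.Rel.zero

/-- Build a process from a list of threads. -/
def buildL : List Proc → Proc
  | [] => .nil
  | x :: l => .par x (buildL l)

lemma tl_buildL : ∀ (l : List Proc), (∀ x ∈ l, IsThread x) → tl (buildL l) = l := by
  intro l
  induction l with
  | nil => intro _; rfl
  | cons x l ih =>
      intro h
      have hx : IsThread x := h x (by simp)
      have : tl x = [x] := by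
        cases x with
        | nil => exact absurd hx (by simp [IsThread])
        | par P Q => exact absurd hx (by simp [IsThread])
        | pvar n => rfl
        | inp a P => rfl
        | out a P => rfl
      simp [buildL, tl, this, ih (fun y hy => h y (by simp [hy]))]

lemma tms_buildL (l : List Proc) (h : ∀ x ∈ l, IsThread x) :
    tms (buildL l) = (l : Multiset Proc) := by
  simp [tms, tl_buildL l h]

lemma scong_par_nil_left (P : Proc) : SCong (.par .nil P) P :=
  (SCong.parComm _ _).trans (SCong.parNil P)

lemma buildL_append : ∀ (l1 l2 : List Proc),
    SCong (buildL (l1 ++ l2)) (.par (buildL l1) (buildL l2)) := by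
  intro l1
  induction l1 with
  | nil =>
      intro l2
      exact (scong_par_nil_left (buildL l2)).symm
  | cons x l ih =>
      intro l2
      simp only [List.cons_append, buildL]
      exact (SCong.parCong (SCong.refl x) (ih l2)).trans
        (SCong.parAssoc x (buildL l) (buildL l2)).symm

/-- Every process is congruent to the build of its thread list. -/
lemma scong_buildL : ∀ (P : Proc), SCong P (buildL (tl P)) := by
  intro P
  induction P with
  | nil => exact SCong.refl _
  | pvar n => exact (SCong.parNil _).symm
  | par P Q ihP ihQ =>
      exact (SCong.parCong ihP ihQ).trans (buildL_append (tl P) (tl Q)).symm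
  | inp a P ih => exact (SCong.parNil _).symm
  | out a P ih => exact (SCong.parNil _).symm

lemma buildL_perm : ∀ {l1 l2 : List Proc}, l1.Perm l2 → SCong (buildL l1) (buildL l2) := by
  intro l1 l2 h
  induction h with
  | nil => exact SCong.refl _
  | cons x _ ih => exact SCong.parCong (SCong.refl x) ih
  | swap x y l =>
      simp only [buildL]
      exact ((SCong.parAssoc y x (buildL l)).symm.trans
        (SCong.parCong (SCong.parComm y x) (SCong.refl _))).trans
        (SCong.parAssoc x y (buildL l))
  | trans _ _ ih1 ih2 => exact ih1.trans ih2

lemma scong_of_rel_list : ∀ (l1 : List Proc) (m2 : Multiset Proc),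
    Multiset.Rel TR (l1 : Multiset Proc) m2 → ∀ l2 : List Proc, m2 = (l2 : Multiset Proc) →
    SCong (buildL l1) (buildL l2) := by
  intro l1
  induction l1 with
  | nil =>
      intro m2 h l2 hm
      rw [show ((([] : List Proc)) : Multiset Proc) = 0 from rfl] at h
      rw [Multiset.rel_zero_left] at h
      rw [h] at hm
      have : l2 = [] := by
        have := (Multiset.coe_eq_zero l2).1 hm.symm
        exact this
      rw [this]
      exact SCong.refl _
  | cons x l1 ih =>
      intro m2 h l2 hm
      have hx : ((x :: l1 : List Proc) : Multiset Proc) = x ::ₘ (l1 : Multiset Proc) := rfl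
      rw [hx] at h
      rcases Multiset.rel_cons_left.1 h with ⟨b, bs', hxb, hrel, rfl⟩
      have hbmem : b ∈ l2 := by
        have : b ∈ (l2 : Multiset Proc) := by rw [← hm]; exact Multiset.mem_cons_self _ _
        simpa using this
      have hperm : l2.Perm (b :: l2.erase b) := List.perm_cons_erase hbmem
      have hl2 : (l2 : Multiset Proc) = b ::ₘ (l2.erase b : List Proc) := by
        rw [Multiset.coe_eq_coe.2 hperm]; rfl
      have hbs' : bs' = ((l2.erase b : List Proc) : Multiset Proc) := by
        exact (Multiset.cons_inj_right b).1 (hm.trans hl2)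
      have ihc := ih bs' hrel (l2.erase b) hbs'
      refine SCong.trans ?_ (buildL_perm hperm.symm)
      exact SCong.parCong hxb.toSCong ihc

/-- `TR`-relatedness of thread multisets induces structural congruence. -/
lemma scong_of_rel {P Q : Proc} (h : Multiset.Rel TR (tms P) (tms Q)) : SCong P Q := by
  have h1 := scong_buildL P
  have h2 := scong_buildL Q
  exact (h1.trans (scong_of_rel_list (tl P) (tms Q) h (tl Q) rfl)).trans h2.symm

lemma scong_of_tms_eq {P Q : Proc} (h : tms P = tms Q) : SCong P Q :=
  scong_of_rel (h ▸ rel_tms_refl P)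

end BEq8

namespace BEq8

open Proc

/-! #### Congruence under lift and subst -/

lemma scong_lift {P Q : Proc} (h : SCong P Q) :
    ∀ d k, SCong (Proc.lift d k P) (Proc.lift d k Q) := by
  induction h with
  | refl P => exact fun d k => SCong.refl _
  | symm _ ih => exact fun d k => (ih d k).symm
  | trans _ _ ih1 ih2 => exact fun d k => (ih1 d k).trans (ih2 d k)
  | parComm P Q => exact fun d k => SCong.parComm _ _
  | parAssoc P Q R => exact fun d k => SCong.parAssoc _ _ _
  | parNil P => exact fun d k => SCong.parNil _
  | parCong _ _ ih1 ih2 => exact fun d k => SCong.parCong (ih1 d k) (ih2 d k)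
  | inpCong a _ ih => exact fun d k => SCong.inpCong a (ih d (k+1))
  | outCong a _ ih => exact fun d k => SCong.outCong a (ih d k)

lemma scong_subst_body {P Q : Proc} (h : SCong P Q) :
    ∀ k S, SCong (P.subst k S) (Q.subst k S) := by
  induction h with
  | refl P => exact fun k S => SCong.refl _
  | symm _ ih => exact fun k S => (ih k S).symm
  | trans _ _ ih1 ih2 => exact fun k S => (ih1 k S).trans (ih2 k S)
  | parComm P Q => exact fun k S => SCong.parComm _ _
  | parAssoc P Q R => exact fun k S => SCong.parAssoc _ _ _
  | parNil P => exact fun k S => SCong.parNil _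
  | parCong _ _ ih1 ih2 => exact fun k S => SCong.parCong (ih1 k S) (ih2 k S)
  | inpCong a _ ih => exact fun k S => SCong.inpCong a (ih (k+1) S)
  | outCong a _ ih => exact fun k S => SCong.outCong a (ih k S)

lemma scong_subst_payload (P : Proc) {S S' : Proc} (h : SCong S S') :
    ∀ k, SCong (P.subst k S) (P.subst k S') := by
  induction P with
  | nil => exact fun k => SCong.refl _
  | pvar n =>
      intro k
      simp only [Proc.subst]
      split_ifs with h1 h2
      · exact scong_lift h k 0
      · exact SCong.refl _
      · exact SCong.refl _
  | par P Q ihP ihQ => exact fun k => SCong.parCong (ihP k) (ihQ k)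
  | inp a P ih => exact fun k => SCong.inpCong a (ih (k+1))
  | out a P ih => exact fun k => SCong.outCong a (ih k)

lemma scong_subst' {P Q S S' : Proc} (hP : SCong P Q) (hS : SCong S S') (k : ℕ) :
    SCong (P.subst k S) (Q.subst k S') :=
  (scong_subst_body hP k S).trans (scong_subst_payload Q hS k)

lemma step_struct {A B : Proc} {l : Label} {C : Proc} (h : SCong A B) (hs : Step B l C) :
    Step A l C := Step.struct h hs (SCong.refl _)

/-! #### Inversion of the LTS modulo structural congruence -/

def InvMot : Proc → Label → Proc → Prop
  | P, .tau, Q => ∃ a R B m, tms P = (Proc.out a R) ::ₘ (Proc.inp a B) ::ₘ m ∧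
      Multiset.Rel TR (tms Q) (tms (B.subst 0 R) + m)
  | P, .outl a R, Q => ∃ R' m, tms P = (Proc.out a R') ::ₘ m ∧ SCong R' R ∧
      Multiset.Rel TR (tms Q) m
  | P, .inl a R, Q => ∃ B m, tms P = (Proc.inp a B) ::ₘ m ∧
      Multiset.Rel TR (tms Q) (tms (B.subst 0 R) + m)

lemma step_inv {P : Proc} {l : Label} {Q : Proc} (h : Step P l Q) : InvMot P l Q := by
  induction h with
  | outS a P =>
      exact ⟨P, 0, by simp, SCong.refl _, by simp⟩
  | inpS a Q P =>
      refine ⟨Q, 0, by simp, ?_⟩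
      simpa using rel_tms_refl (Q.subst 0 P)
  | @parL P l P' Q _ ih =>
      cases l with
      | tau =>
          obtain ⟨a, R, B, m, h1, h2⟩ := ih
          refine ⟨a, R, B, m + tms Q, ?_, ?_⟩
          · simp [h1, Multiset.cons_add]
          · simpa [add_assoc] using h2.add (rel_tms_refl Q)
      | outl a R =>
          obtain ⟨R', m, h1, hsc, h2⟩ := ih
          refine ⟨R', m + tms Q, ?_, hsc, ?_⟩
          · simp [h1, Multiset.cons_add]
          · simpa using h2.add (rel_tms_refl Q)
      | inl a R =>
          obtain ⟨B, m, h1, h2⟩ := ih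
          refine ⟨B, m + tms Q, ?_, ?_⟩
          · simp [h1, Multiset.cons_add]
          · simpa [add_assoc] using h2.add (rel_tms_refl Q)
  | @parR Q l Q' P _ ih =>
      cases l with
      | tau =>
          obtain ⟨a, R, B, m, h1, h2⟩ := ih
          refine ⟨a, R, B, m + tms P, ?_, ?_⟩
          · rw [tms_par, h1, add_comm, Multiset.cons_add, Multiset.cons_add]
          · rw [tms_par, add_comm (tms P) (tms Q')]
            simpa [add_assoc] using h2.add (rel_tms_refl P)
      | outl a R =>
          obtain ⟨R', m, h1, hsc, h2⟩ := ih
          refine ⟨R', m + tms P, ?_, hsc, ?_⟩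
          · rw [tms_par, h1, add_comm, Multiset.cons_add]
          · rw [tms_par, add_comm (tms P) (tms Q')]
            exact h2.add (rel_tms_refl P)
      | inl a R =>
          obtain ⟨B, m, h1, h2⟩ := ih
          refine ⟨B, m + tms P, ?_, ?_⟩
          · rw [tms_par, h1, add_comm, Multiset.cons_add]
          · rw [tms_par, add_comm (tms P) (tms Q')]
            simpa [add_assoc] using h2.add (rel_tms_refl P)
  | @comm1 P Q P' Q' a R hP hQ ih1 ih2 =>
      obtain ⟨R', mP, h1, hsc, hrel1⟩ := ih1
      obtain ⟨B, mQ, h3, hrel2⟩ := ih2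
      refine ⟨a, R', B, mP + mQ, ?_, ?_⟩
      · rw [tms_par, h1, h3]
        simp [Multiset.cons_add, Multiset.add_cons]
        rw [Multiset.cons_swap]
      · have hx := hrel1.add hrel2
        rw [tms_par]
        rw [show mP + (tms (B.subst 0 R) + mQ) = tms (B.subst 0 R) + (mP + mQ) from by
          rw [add_left_comm]] at hx
        refine hx.trans TR ?_
        exact (scong_rel (scong_subst_payload B hsc.symm 0)).add
          (rel_refl_of_threads (fun x hx' => by
            rcases Multiset.mem_add.1 hx' with h' | h'
            · exact tms_threads x (h1 ▸ Multiset.mem_cons_of_mem h')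
            · exact tms_threads x (h3 ▸ Multiset.mem_cons_of_mem h')))
  | @comm2 P Q P' Q' a R hP hQ ih1 ih2 =>
      obtain ⟨B, mP, h1, hrel1⟩ := ih1
      obtain ⟨R', mQ, h3, hsc, hrel2⟩ := ih2
      refine ⟨a, R', B, mP + mQ, ?_, ?_⟩
      · rw [tms_par, h1, h3]
        simp only [Multiset.cons_add, Multiset.add_cons]
      · have hx := hrel1.add hrel2
        rw [tms_par]
        rw [show tms (B.subst 0 R) + mP + mQ = tms (B.subst 0 R) + (mP + mQ) from
          add_assoc _ _ _] at hx
        refine hx.trans TR ?_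
        exact (scong_rel (scong_subst_payload B hsc.symm 0)).add
          (rel_refl_of_threads (fun x hx' => by
            rcases Multiset.mem_add.1 hx' with h' | h'
            · exact tms_threads x (h1 ▸ Multiset.mem_cons_of_mem h')
            · exact tms_threads x (h3 ▸ Multiset.mem_cons_of_mem h')))
  | @struct P P' l Q Q' hPP' hstep hQQ' ih =>
      have hrelP : Multiset.Rel TR (tms P) (tms P') := scong_rel hPP'
      cases l with
      | tau =>
          obtain ⟨a, R, B, m, h1, h2⟩ := ih
          rw [h1] at hrelP
          obtain ⟨u, m1, hu, hrel1, he1⟩ := Multiset.rel_cons_right.1 hrelP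
          obtain ⟨v, m2, hv, hrel2, he2⟩ := Multiset.rel_cons_right.1 hrel1
          obtain ⟨R0, rfl, hR0⟩ : ∃ R0, u = Proc.out a R0 ∧ SCong R0 R := by
            cases hu with | out _ hsc => exact ⟨_, rfl, hsc⟩
          obtain ⟨B0, rfl, hB0⟩ : ∃ B0, v = Proc.inp a B0 ∧ SCong B0 B := by
            cases hv with | inp _ hsc => exact ⟨_, rfl, hsc⟩
          refine ⟨a, R0, B0, m2, by rw [he1, he2], ?_⟩
          refine ((scong_rel hQQ'.symm).trans TR h2).trans TR ?_
          exact (scong_rel (scong_subst' hB0.symm hR0.symm 0)).add (rel_symm hrel2)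
      | outl a R =>
          obtain ⟨R', m, h1, hsc, h2⟩ := ih
          rw [h1] at hrelP
          obtain ⟨u, m1, hu, hrel1, he1⟩ := Multiset.rel_cons_right.1 hrelP
          obtain ⟨R0, rfl, hR0⟩ : ∃ R0, u = Proc.out a R0 ∧ SCong R0 R' := by
            cases hu with | out _ hsc' => exact ⟨_, rfl, hsc'⟩
          refine ⟨R0, m1, he1, hR0.trans hsc, ?_⟩
          exact ((scong_rel hQQ'.symm).trans TR h2).trans TR (rel_symm hrel1)
      | inl a R =>
          obtain ⟨B, m, h1, h2⟩ := ih
          rw [h1] at hrelP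
          obtain ⟨v, m1, hv, hrel1, he1⟩ := Multiset.rel_cons_right.1 hrelP
          obtain ⟨B0, rfl, hB0⟩ : ∃ B0, v = Proc.inp a B0 ∧ SCong B0 B := by
            cases hv with | inp _ hsc => exact ⟨_, rfl, hsc⟩
          refine ⟨B0, m1, he1, ?_⟩
          refine ((scong_rel hQQ'.symm).trans TR h2).trans TR ?_
          exact (scong_rel (scong_subst_body hB0.symm 0 R)).add (rel_symm hrel1)

/-- Inversion for tau steps. -/
lemma step_tau_inv {P Q : Proc} (h : Step P .tau Q) :
    ∃ a R B m, tms P = (Proc.out a R) ::ₘ (Proc.inp a B) ::ₘ m ∧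
      Multiset.Rel TR (tms Q) (tms (B.subst 0 R) + m) := step_inv h

lemma step_out_inv {P Q : Proc} {a : Name} {R : Proc} (h : Step P (.outl a R) Q) :
    ∃ R' m, tms P = (Proc.out a R') ::ₘ m ∧ SCong R' R ∧ Multiset.Rel TR (tms Q) m :=
  step_inv h

lemma step_inp_inv {P Q : Proc} {a : Name} {R : Proc} (h : Step P (.inl a R) Q) :
    ∃ B m, tms P = (Proc.inp a B) ::ₘ m ∧
      Multiset.Rel TR (tms Q) (tms (B.subst 0 R) + m) := step_inv h

end BEq8

namespace BEq8

open Proc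

/-! #### Reconstruction of transitions from thread decompositions -/

lemma thr_of_cons {P x : Proc} {m : Multiset Proc} (h : tms P = x ::ₘ m) :
    ∀ y ∈ m, IsThread y := fun y hy =>
  tms_threads y (h ▸ Multiset.mem_cons_of_mem hy)

lemma thr_of_cons2 {P x z : Proc} {m : Multiset Proc}
    (h : tms P = x ::ₘ z ::ₘ m) : ∀ y ∈ m, IsThread y := fun y hy =>
  tms_threads y (h ▸ Multiset.mem_cons_of_mem (Multiset.mem_cons_of_mem hy))

lemma step_tau_of {P : Proc} {a : Name} {R B : Proc} {m : Multiset Proc}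
    (h : tms P = (Proc.out a R) ::ₘ (Proc.inp a B) ::ₘ m) :
    ∃ Q, Step P .tau Q ∧ tms Q = tms (B.subst 0 R) + m := by
  induction m using Quotient.inductionOn with
  | _ lm =>
    have hth : ∀ x ∈ lm, IsThread x := fun x hx => thr_of_cons2 h x (by simpa using hx)
    set G := buildL lm with hG
    have htG : tms G = (lm : Multiset Proc) := tms_buildL lm hth
    have heq : tms P = tms (Proc.par (Proc.out a R) (Proc.par (Proc.inp a B) G)) := by
      simp [htG, Multiset.singleton_add, h]
    have hsc : SCong P (Proc.par (Proc.out a R) (Proc.par (Proc.inp a B) G)) :=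
      scong_of_tms_eq heq
    refine ⟨Proc.par .nil (Proc.par (B.subst 0 R) G), ?_, ?_⟩
    · exact step_struct hsc (Step.comm1 (Step.outS a R) (Step.parL G (Step.inpS a B R)))
    · simp [htG]
lemma step_out_of {P : Proc} {a : Name} {R : Proc} {m : Multiset Proc}
    (h : tms P = (Proc.out a R) ::ₘ m) :
    ∃ Q, Step P (.outl a R) Q ∧ tms Q = m := by
  induction m using Quotient.inductionOn with
  | _ lm =>
    have hth : ∀ x ∈ lm, IsThread x := fun x hx => thr_of_cons h x (by simpa using hx)
    set G := buildL lm with hG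
    have htG : tms G = (lm : Multiset Proc) := tms_buildL lm hth
    have hsc : SCong P (Proc.par (Proc.out a R) G) := by
      refine scong_of_tms_eq ?_
      simp [htG, Multiset.singleton_add, h]
    refine ⟨Proc.par .nil G, ?_, ?_⟩
    · exact step_struct hsc (Step.parL G (Step.outS a R))
    · simp [htG]

lemma step_inp_of {P : Proc} {a : Name} {B : Proc} {m : Multiset Proc}
    (h : tms P = (Proc.inp a B) ::ₘ m) (R : Proc) :
    ∃ Q, Step P (.inl a R) Q ∧ tms Q = tms (B.subst 0 R) + m := by
  induction m using Quotient.inductionOn with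
  | _ lm =>
    have hth : ∀ x ∈ lm, IsThread x := fun x hx => thr_of_cons h x (by simpa using hx)
    set G := buildL lm with hG
    have htG : tms G = (lm : Multiset Proc) := tms_buildL lm hth
    have hsc : SCong P (Proc.par (Proc.inp a B) G) := by
      refine scong_of_tms_eq ?_
      simp [htG, Multiset.singleton_add, h]
    refine ⟨Proc.par (B.subst 0 R) G, ?_, ?_⟩
    · exact step_struct hsc (Step.parL G (Step.inpS a B R))
    · simp [htG]

/-! #### Free names -/

lemma fnames_lift (P : Proc) : ∀ d k, (Proc.lift d k P).fnames = P.fnames := by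
  induction P with
  | nil => intro d k; rfl
  | pvar n => intro d k; simp only [Proc.lift]; split_ifs <;> rfl
  | par P Q ihP ihQ => intro d k; simp [Proc.lift, Proc.fnames, ihP, ihQ]
  | inp a P ih => intro d k; simp [Proc.lift, Proc.fnames, ih]
  | out a P ih => intro d k; simp [Proc.lift, Proc.fnames, ih]

lemma fnames_subst (P : Proc) : ∀ k S, (P.subst k S).fnames ⊆ P.fnames ∪ S.fnames := by
  induction P with
  | nil => intro k S; simp [Proc.subst, Proc.fnames]
  | pvar n =>
      intro k S
      simp only [Proc.subst]
      split_ifs with h1 h2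
      · rw [fnames_lift]
        simp [Proc.fnames]
      · simp [Proc.fnames]
      · simp [Proc.fnames]
  | par P Q ihP ihQ =>
      intro k S
      simp only [Proc.subst, Proc.fnames]
      intro x hx
      rcases Finset.mem_union.1 hx with h | h
      · have := ihP k S h
        rcases Finset.mem_union.1 this with h' | h'
        · exact Finset.mem_union_left _ (Finset.mem_union_left _ h')
        · exact Finset.mem_union_right _ h'
      · have := ihQ k S h
        rcases Finset.mem_union.1 this with h' | h'
        · exact Finset.mem_union_left _ (Finset.mem_union_right _ h')
        · exact Finset.mem_union_right _ h'
  | inp a P ih =>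
      intro k S
      simp only [Proc.subst, Proc.fnames]
      intro x hx
      rcases Finset.mem_insert.1 hx with h | h
      · exact Finset.mem_union_left _ (by simp [h])
      · have := ih (k+1) S h
        rcases Finset.mem_union.1 this with h' | h'
        · exact Finset.mem_union_left _ (Finset.mem_insert_of_mem h')
        · exact Finset.mem_union_right _ h'
  | out a P ih =>
      intro k S
      simp only [Proc.subst, Proc.fnames]
      intro x hx
      rcases Finset.mem_insert.1 hx with h | h
      · exact Finset.mem_union_left _ (by simp [h])
      · have := ih k S h
        rcases Finset.mem_union.1 this with h' | h'
        · exact Finset.mem_union_left _ (Finset.mem_insert_of_mem h')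
        · exact Finset.mem_union_right _ h'

lemma scong_fnames {P Q : Proc} (h : SCong P Q) : P.fnames = Q.fnames := by
  induction h with
  | refl P => rfl
  | symm _ ih => exact ih.symm
  | trans _ _ ih1 ih2 => exact ih1.trans ih2
  | parComm P Q => simp [Proc.fnames, Finset.union_comm]
  | parAssoc P Q R => simp [Proc.fnames, Finset.union_assoc]
  | parNil P => simp [Proc.fnames]
  | parCong _ _ ih1 ih2 => simp [Proc.fnames, ih1, ih2]
  | inpCong a _ ih => simp [Proc.fnames, ih]
  | outCong a _ ih => simp [Proc.fnames, ih]

def FnMot : Proc → Label → Proc → Prop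
  | P, .tau, Q => Q.fnames ⊆ P.fnames
  | P, .outl a R, Q => Q.fnames ⊆ P.fnames ∧ R.fnames ⊆ P.fnames ∧ a ∈ P.fnames
  | P, .inl a R, Q => Q.fnames ⊆ P.fnames ∪ R.fnames ∧ a ∈ P.fnames

lemma step_fnames {P : Proc} {l : Label} {Q : Proc} (h : Step P l Q) : FnMot P l Q := by
  induction h with
  | outS a P =>
      refine ⟨by simp [Proc.fnames], ?_, by simp [Proc.fnames]⟩
      simp [Proc.fnames]
  | inpS a Q P =>
      constructor
      · intro x hx
        have := fnames_subst Q 0 P hx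
        rcases Finset.mem_union.1 this with h | h
        · exact Finset.mem_union_left _ (by simp [Proc.fnames, h])
        · exact Finset.mem_union_right _ h
      · simp [Proc.fnames]
  | @parL P l P' Q _ ih =>
      cases l with
      | tau =>
          intro x hx
          simp only [Proc.fnames] at hx ⊢
          rcases Finset.mem_union.1 hx with h | h
          · exact Finset.mem_union_left _ (ih h)
          · exact Finset.mem_union_right _ h
      | outl a R =>
          obtain ⟨h1, h2, h3⟩ := ih
          refine ⟨?_, ?_, ?_⟩
          · intro x hx
            simp only [Proc.fnames] at hx ⊢
            rcases Finset.mem_union.1 hx with h | h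
            · exact Finset.mem_union_left _ (h1 h)
            · exact Finset.mem_union_right _ h
          · intro x hx
            simp only [Proc.fnames]
            exact Finset.mem_union_left _ (h2 hx)
          · simp only [Proc.fnames]
            exact Finset.mem_union_left _ h3
      | inl a R =>
          obtain ⟨h1, h2⟩ := ih
          refine ⟨?_, ?_⟩
          · intro x hx
            simp only [Proc.fnames] at hx ⊢
            rcases Finset.mem_union.1 hx with h | h
            · have := h1 h
              rcases Finset.mem_union.1 this with h' | h'
              · exact Finset.mem_union_left _ (Finset.mem_union_left _ h')
              · exact Finset.mem_union_right _ h'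
            · exact Finset.mem_union_left _ (Finset.mem_union_right _ h)
          · simp only [Proc.fnames]
            exact Finset.mem_union_left _ h2
  | @parR Q l Q' P _ ih =>
      cases l with
      | tau =>
          intro x hx
          simp only [Proc.fnames] at hx ⊢
          rcases Finset.mem_union.1 hx with h | h
          · exact Finset.mem_union_left _ h
          · exact Finset.mem_union_right _ (ih h)
      | outl a R =>
          obtain ⟨h1, h2, h3⟩ := ih
          refine ⟨?_, ?_, ?_⟩
          · intro x hx
            simp only [Proc.fnames] at hx ⊢
            rcases Finset.mem_union.1 hx with h | h
            · exact Finset.mem_union_left _ h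
            · exact Finset.mem_union_right _ (h1 h)
          · intro x hx
            simp only [Proc.fnames]
            exact Finset.mem_union_right _ (h2 hx)
          · simp only [Proc.fnames]
            exact Finset.mem_union_right _ h3
      | inl a R =>
          obtain ⟨h1, h2⟩ := ih
          refine ⟨?_, ?_⟩
          · intro x hx
            simp only [Proc.fnames] at hx ⊢
            rcases Finset.mem_union.1 hx with h | h
            · exact Finset.mem_union_left _ (Finset.mem_union_left _ h)
            · have := h1 h
              rcases Finset.mem_union.1 this with h' | h'
              · exact Finset.mem_union_left _ (Finset.mem_union_right _ h')
              · exact Finset.mem_union_right _ h'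
          · simp only [Proc.fnames]
            exact Finset.mem_union_right _ h2
  | @comm1 P Q P' Q' a R hP hQ ih1 ih2 =>
      obtain ⟨g1, g2, g3⟩ := ih1
      obtain ⟨g4, g5⟩ := ih2
      intro x hx
      simp only [Proc.fnames] at hx ⊢
      rcases Finset.mem_union.1 hx with h | h
      · exact Finset.mem_union_left _ (g1 h)
      · have := g4 h
        rcases Finset.mem_union.1 this with h' | h'
        · exact Finset.mem_union_right _ h'
        · exact Finset.mem_union_left _ (g2 h')
  | @comm2 P Q P' Q' a R hP hQ ih1 ih2 =>
      obtain ⟨g1, g2⟩ := ih1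
      obtain ⟨g3, g4, g5⟩ := ih2
      intro x hx
      simp only [Proc.fnames] at hx ⊢
      rcases Finset.mem_union.1 hx with h | h
      · have := g1 h
        rcases Finset.mem_union.1 this with h' | h'
        · exact Finset.mem_union_left _ h'
        · exact Finset.mem_union_right _ (g4 h')
      · exact Finset.mem_union_right _ (g3 h)
  | @struct P P' l Q Q' h1 _ h3 ih =>
      have e1 := scong_fnames h1
      have e3 := scong_fnames h3
      cases l with
      | tau =>
          show Q.fnames ⊆ P.fnames
          rw [e1, ← e3]; exact ih
      | outl a R =>
          obtain ⟨g1, g2, g3⟩ := ih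
          exact ⟨by rw [e1, ← e3]; exact g1, by rw [e1]; exact g2, by rw [e1]; exact g3⟩
      | inl a R =>
          obtain ⟨g1, g2⟩ := ih
          exact ⟨by rw [e1, ← e3]; exact g1, by rw [e1]; exact g2⟩

lemma step_tau_fnames {P Q : Proc} (h : Step P .tau Q) : Q.fnames ⊆ P.fnames :=
  step_fnames h

lemma step_out_fnames {P Q : Proc} {a : Name} {R : Proc} (h : Step P (.outl a R) Q) :
    Q.fnames ⊆ P.fnames ∧ R.fnames ⊆ P.fnames ∧ a ∈ P.fnames := step_fnames h

lemma step_inp_fnames {P Q : Proc} {a : Name} {R : Proc} (h : Step P (.inl a R) Q) :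
    Q.fnames ⊆ P.fnames ∪ R.fnames ∧ a ∈ P.fnames := step_fnames h

lemma mem_tms_fnames {P x : Proc} (hx : x ∈ tms P) : x.fnames ⊆ P.fnames := by
  induction P with
  | nil => simp [tms, tl] at hx
  | pvar n =>
      rw [tms_pvar, Multiset.mem_singleton] at hx
      subst hx
      exact Finset.Subset.refl _
  | par P Q ihP ihQ =>
      rw [tms_par] at hx
      rcases Multiset.mem_add.1 hx with h | h
      · exact (ihP h).trans (by simp [Proc.fnames])
      · exact (ihQ h).trans (by simp [Proc.fnames])
  | inp a P ih =>
      rw [tms_inp, Multiset.mem_singleton] at hx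
      subst hx
      exact Finset.Subset.refl _
  | out a P ih =>
      rw [tms_out, Multiset.mem_singleton] at hx
      subst hx
      exact Finset.Subset.refl _

/-! #### Weak transitions and barbs -/

lemma wtau_single {P Q : Proc} (h : Step P .tau Q) : WTau P Q :=
  Relation.ReflTransGen.single h

lemma wtau_par_left {X Y : Proc} (S : Proc) (h : WTau X Y) :
    WTau (.par X S) (.par Y S) :=
  Relation.ReflTransGen.lift (p := TauStep) (fun Z => Proc.par Z S) (fun _ _ hab => Step.parL S hab) _ _ h

lemma strongbarb_scong {A B : Proc} {H : Set Name} {α : Barb} (h : SCong A B)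
    (hb : StrongBarb H B α) : StrongBarb H A α := by
  cases α with
  | inb a =>
      obtain ⟨ha, Q, R, hs⟩ := hb
      exact ⟨ha, Q, R, step_struct h hs⟩
  | outb a =>
      obtain ⟨ha, Q, R, hs⟩ := hb
      exact ⟨ha, Q, R, step_struct h hs⟩

lemma weakbarb_scong {A B : Proc} {H : Set Name} {α : Barb} (h : SCong A B)
    (hb : WeakBarb H B α) : WeakBarb H A α := by
  obtain ⟨B', hw, hsb⟩ := hb
  rcases (Relation.ReflTransGen.cases_head hw) with rfl | ⟨Z, h1, h2⟩
  · exact ⟨A, Relation.ReflTransGen.refl, strongbarb_scong h hsb⟩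
  · exact ⟨B', Relation.ReflTransGen.head (step_struct h h1) h2, hsb⟩

lemma weakbarb_wtau {A B : Proc} {H : Set Name} {α : Barb} (h : WTau A B)
    (hb : WeakBarb H B α) : WeakBarb H A α := by
  obtain ⟨B', hw, hsb⟩ := hb
  exact ⟨B', h.trans hw, hsb⟩

lemma strongbarb_weakbarb {A : Proc} {H : Set Name} {α : Barb}
    (h : StrongBarb H A α) : WeakBarb H A α :=
  ⟨A, Relation.ReflTransGen.refl, h⟩

lemma wkobs_scong {A B : Proc} (h : SCong A B) : WkObs A = WkObs B := by
  ext α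
  constructor
  · exact fun hb => weakbarb_scong h.symm hb
  · exact fun hb => weakbarb_scong h hb

lemma wkobs_mono {A B : Proc} (h : WTau A B) : WkObs B ⊆ WkObs A :=
  fun _ hb => weakbarb_wtau h hb

lemma weakbarb_par_left {X : Proc} (S : Proc) {H : Set Name} {α : Barb}
    (h : WeakBarb H X α) : WeakBarb H (.par X S) α := by
  obtain ⟨X', hw, hsb⟩ := h
  refine ⟨.par X' S, wtau_par_left S hw, ?_⟩
  cases α with
  | inb a =>
      obtain ⟨ha, Q, R, hs⟩ := hsb
      exact ⟨ha, Q, .par R S, Step.parL S hs⟩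
  | outb a =>
      obtain ⟨ha, Q, R, hs⟩ := hsb
      exact ⟨ha, Q, .par R S, Step.parL S hs⟩

end BEq8

namespace BEq8

open Proc

/-! #### de Bruijn identities -/

lemma lift_zero : ∀ (P : Proc) (k : ℕ), Proc.lift 0 k P = P := by
  intro P
  induction P with
  | nil => intro k; rfl
  | pvar n => intro k; simp [Proc.lift]
  | par P Q ihP ihQ => intro k; simp [Proc.lift, ihP, ihQ]
  | inp a P ih => intro k; simp [Proc.lift, ih]
  | out a P ih => intro k; simp [Proc.lift, ih]

lemma lift_lift_low : ∀ (P : Proc) (d e m k : ℕ), m ≤ k →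
    Proc.lift d (k + e) (Proc.lift e m P) = Proc.lift e m (Proc.lift d k P) := by
  intro P
  induction P with
  | nil => intros; rfl
  | pvar n =>
      intro d e m k hmk
      by_cases h1 : n < m
      · have h2 : n < k := lt_of_lt_of_le h1 hmk
        simp [Proc.lift, h1, h2, show n < k + e from by omega]
      · by_cases h2 : n < k
        · simp [Proc.lift, h1, h2, show n + e < k + e from by omega]
        · simp only [Proc.lift, if_neg h1, if_neg h2,
            if_neg (show ¬ (n + e < k + e) from by omega),
            if_neg (show ¬ (n + d < m) from by omega), Proc.pvar.injEq]
          omega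
  | par P Q ihP ihQ => intro d e m k h; simp [Proc.lift, ihP _ _ _ _ h, ihQ _ _ _ _ h]
  | inp a P ih =>
      intro d e m k h
      simp only [Proc.lift]
      rw [show k + e + 1 = (k + 1) + e from by omega, ih _ _ _ _ (by omega)]
  | out a P ih => intro d e m k h; simp [Proc.lift, ih _ _ _ _ h]

lemma lift_lift_merge : ∀ (P : Proc) (d e j m : ℕ), j ≤ m → m ≤ j + e →
    Proc.lift d m (Proc.lift e j P) = Proc.lift (e + d) j P := by
  intro P
  induction P with
  | nil => intros; rfl
  | pvar n =>
      intro d e j m h1 h2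
      by_cases hn : n < j
      · simp [Proc.lift, hn, show n < m from by omega]
      · simp only [Proc.lift, if_neg hn, if_neg (show ¬ (n + e < m) from by omega),
          Proc.pvar.injEq]
        omega
  | par P Q ihP ihQ => intro d e j m h1 h2; simp [Proc.lift, ihP _ _ _ _ h1 h2, ihQ _ _ _ _ h1 h2]
  | inp a P ih =>
      intro d e j m h1 h2
      simp only [Proc.lift]
      rw [ih _ _ _ _ (by omega) (by omega)]
  | out a P ih => intro d e j m h1 h2; simp [Proc.lift, ih _ _ _ _ h1 h2]

lemma subst_lift_lower : ∀ (P : Proc) (e m k : ℕ) (C : Proc), m ≤ k → k ≤ m + e →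
    Proc.subst (Proc.lift (e + 1) m P) k C = Proc.lift e m P := by
  intro P
  induction P with
  | nil => intros; rfl
  | pvar n =>
      intro e m k C h1 h2
      by_cases hn : n < m
      · have : n ≠ k := by omega
        simp [Proc.lift, Proc.subst, hn, this, show ¬ (k < n) from by omega]
      · have h3 : ¬ (n + (e + 1) < m) := by omega
        have h4 : n + (e + 1) ≠ k := by omega
        have h5 : k < n + (e + 1) := by omega
        simp only [Proc.lift, if_neg hn, Proc.subst, if_neg h4, if_pos h5, Proc.pvar.injEq]
        omega
  | par P Q ihP ihQ =>
      intro e m k C h1 h2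
      simp [Proc.lift, Proc.subst, ihP _ _ _ C h1 h2, ihQ _ _ _ C h1 h2]
  | inp a P ih =>
      intro e m k C h1 h2
      simp only [Proc.lift, Proc.subst]
      rw [ih _ _ _ C (by omega) (by omega)]
  | out a P ih =>
      intro e m k C h1 h2
      simp [Proc.lift, Proc.subst, ih _ _ _ C h1 h2]

lemma subst_lift_comm : ∀ (P : Proc) (e m k : ℕ) (C : Proc), m ≤ k →
    Proc.subst (Proc.lift e m P) (k + e) C = Proc.lift e m (Proc.subst P k C) := by
  intro P
  induction P with
  | nil => intros; rfl
  | pvar n =>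
      intro e m k C h1
      by_cases hn : n < m
      · have : n ≠ k + e := by omega
        have h2 : n ≠ k := by omega
        simp [Proc.lift, Proc.subst, hn, this, h2,
          show ¬ (k + e < n) from by omega, show ¬ (k < n) from by omega]
      · rcases lt_trichotomy n k with h2 | h2 | h2
        · have : n + e ≠ k + e := by omega
          simp [Proc.lift, Proc.subst, hn, this, h2,
            show ¬ (k + e < n + e) from by omega, show ¬ (k < n) from by omega,
            show n ≠ k from by omega]
        · subst h2
          simp [Proc.lift, Proc.subst, hn]
          rw [lift_lift_merge C e n 0 m (by omega) (by omega)]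
        · have h3 : n + e ≠ k + e := by omega
          have h4 : k + e < n + e := by omega
          have h5 : n ≠ k := by omega
          simp only [Proc.lift, if_neg hn, Proc.subst, if_neg h3, if_pos h4,
            if_neg h5, if_pos h2, if_neg (show ¬ (n - 1 < m) from by omega),
            Proc.pvar.injEq]
          omega
  | par P Q ihP ihQ =>
      intro e m k C h1
      simp [Proc.lift, Proc.subst, ihP _ _ _ C h1, ihQ _ _ _ C h1]
  | inp a P ih =>
      intro e m k C h1
      simp only [Proc.lift, Proc.subst]
      rw [show k + e + 1 = (k + 1) + e from by omega, ih _ _ _ C (by omega)]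
  | out a P ih =>
      intro e m k C h1
      simp [Proc.lift, Proc.subst, ih _ _ _ C h1]

lemma subst_lift_cancel (P C : Proc) (k : ℕ) :
    Proc.subst (Proc.lift 1 k P) k C = P := by
  have := subst_lift_lower P 0 k k C (le_refl _) (by omega)
  rwa [lift_zero] at this

/-- The key identity for the Grab transition. -/
lemma grab_identity (X : Proc) (j : ℕ) (A S R : Proc) :
    ((((Proc.lift 1 j X).lift 1 (j + 2)).subst (j + 2) A).subst (j + 1) S).subst j R
      = X.subst j S := by
  rw [subst_lift_cancel (Proc.lift 1 j X) A (j + 2)]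
  rw [show j + 1 = j + 1 from rfl]
  rw [subst_lift_comm X 1 j j S (le_refl _)]
  rw [subst_lift_cancel (X.subst j S) R j]

/-! #### Bounded processes -/

def PB : ℕ → Proc → Prop
  | _, .nil => True
  | k, .pvar n => n < k
  | k, .par P Q => PB k P ∧ PB k Q
  | k, .inp _ P => PB (k + 1) P
  | k, .out _ P => PB k P

lemma lift_of_PB : ∀ (P : Proc) (k : ℕ), PB k P → ∀ d j, k ≤ j → Proc.lift d j P = P := by
  intro P
  induction P with
  | nil => intros; rfl
  | pvar n =>
      intro k h d j hk
      have h' : n < k := h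
      simp [Proc.lift, show n < j from by omega]
  | par P Q ihP ihQ =>
      intro k h d j hk
      simp [Proc.lift, ihP k h.1 d j hk, ihQ k h.2 d j hk]
  | inp a P ih =>
      intro k h d j hk
      simp only [Proc.lift]
      rw [ih (k+1) h d (j+1) (by omega)]
  | out a P ih =>
      intro k h d j hk
      simp [Proc.lift, ih k h d j hk]

lemma subst_of_PB : ∀ (P : Proc) (k : ℕ), PB k P → ∀ j S, k ≤ j → Proc.subst P j S = P := by
  intro P
  induction P with
  | nil => intros; rfl
  | pvar n =>
      intro k h j S hk
      have h' : n < k := h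
      simp [Proc.subst, show n ≠ j from by omega, show ¬ (j < n) from by omega]
  | par P Q ihP ihQ =>
      intro k h j S hk
      simp [Proc.subst, ihP k h.1 j S hk, ihQ k h.2 j S hk]
  | inp a P ih =>
      intro k h j S hk
      simp only [Proc.subst]
      rw [ih (k+1) h (j+1) S (by omega)]
  | out a P ih =>
      intro k h j S hk
      simp [Proc.subst, ih k h j S hk]

lemma PB_trFV : ∀ (f : ℕ) (k : ℕ), PB k (trFV f) := by
  intro f
  induction f with
  | zero => intro k; simp [trFV, PB]
  | succ f ih => intro k; exact ih (k+1)

lemma lift_trFV (f d k : ℕ) : Proc.lift d k (trFV f) = trFV f :=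
  lift_of_PB _ 0 (PB_trFV f 0) d k (by omega)

lemma subst_trFV (f k : ℕ) (S : Proc) : Proc.subst (trFV f) k S = trFV f :=
  subst_of_PB _ 0 (PB_trFV f 0) k S (by omega)

lemma PB_trMt (k : ℕ) : PB k trMt := by simp [trMt, PB]

lemma PB_Restart (k : ℕ) : PB k Restart := by
  refine ⟨?_, ?_, ?_, ?_⟩ <;> simp [Restart, PB, trMt]

lemma lift_Restart (d k : ℕ) : Proc.lift d k Restart = Restart :=
  lift_of_PB _ 0 (by simpa using PB_Restart 0) d k (by omega)

lemma subst_Restart (k : ℕ) (S : Proc) : Proc.subst Restart k S = Restart :=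
  subst_of_PB _ 0 (by simpa using PB_Restart 0) k S (by omega)

/-! #### Translation commutes with lifting and substitution -/

lemma trTN_lift : ∀ (t : Term) (d k : ℕ),
    trTN (Term.liftT d k t) = Proc.lift d k (trTN t) := by
  intro t
  induction t with
  | fvar f => intro d k; simp [Term.liftT, trTN, lift_trFV]
  | bvar n =>
      intro d k
      by_cases h : n < k
      · simp [Term.liftT, h, trTN, Proc.lift]
      · simp [Term.liftT, h, trTN, Proc.lift]
  | lam t ih =>
      intro d k
      have h1 : Proc.lift d (k+1+1+1) (Proc.lift 1 2 (Proc.lift 1 0 (trTN t)))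
          = Proc.lift 1 2 (Proc.lift 1 0 (Proc.lift d (k+1) (trTN t))) := by
        rw [show k+1+1+1 = (k+2)+1 from rfl,
            lift_lift_low (Proc.lift 1 0 (trTN t)) d 1 2 (k+2) (by omega),
            show k+2 = (k+1)+1 from rfl,
            lift_lift_low (trTN t) d 1 0 (k+1) (by omega)]
      simp [Term.liftT, trTN, Proc.lift, Restart, trMt, ih, h1]
  | app t s iht ihs =>
      intro d k
      have h1 : ∀ X : Proc, Proc.lift d (k+1) (Proc.lift 1 0 X)
          = Proc.lift 1 0 (Proc.lift d k X) :=
        fun X => lift_lift_low X d 1 0 k (by omega)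
      simp [Term.liftT, trTN, Proc.lift, iht, ihs, h1]

lemma trTN_subst : ∀ (t s : Term) (k : ℕ),
    trTN (Term.substT t k s) = Proc.subst (trTN t) k (trTN s) := by
  intro t
  induction t with
  | fvar f => intro s k; simp [Term.substT, trTN, subst_trFV]
  | bvar n =>
      intro s k
      rcases lt_trichotomy n k with h | h | h
      · simp [Term.substT, trTN, Proc.subst, show n ≠ k from by omega,
          show ¬ (k < n) from by omega]
      · subst h
        simp only [Term.substT, if_pos rfl, trTN, Proc.subst]
        exact trTN_lift s n 0
      · simp [Term.substT, trTN, Proc.subst, show n ≠ k from by omega, h]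
  | lam t ih =>
      intro s k
      have h1 : Proc.subst (Proc.lift 1 2 (Proc.lift 1 0 (trTN t))) (k+1+1+1) (trTN s)
          = Proc.lift 1 2 (Proc.lift 1 0 (Proc.subst (trTN t) (k+1) (trTN s))) := by
        rw [show k+1+1+1 = (k+2)+1 from rfl,
            subst_lift_comm (Proc.lift 1 0 (trTN t)) 1 2 (k+2) (trTN s) (by omega),
            show k+2 = (k+1)+1 from rfl,
            subst_lift_comm (trTN t) 1 0 (k+1) (trTN s) (by omega)]
      simp [Term.substT, trTN, Proc.subst, Proc.lift, Restart, trMt, ih, h1]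
  | app t s' iht ihs =>
      intro s k
      have h1 : ∀ X : Proc, Proc.subst (Proc.lift 1 0 X) (k+1) (trTN s)
          = Proc.lift 1 0 (Proc.subst X k (trTN s)) :=
        fun X => subst_lift_comm X 1 0 k (trTN s) (by omega)
      simp [Term.substT, trTN, Proc.subst, iht, ihs, h1]

end BEq8

namespace BEq8

open Proc

/-! #### The state space of the machine translation -/

/-- Common tail: counter, `Rec` and `rec!<Rec>`. -/
def BBn (n : ℕ) : Proc := .par (.out kN (trFV n)) (.par RecP (.out recN RecP))

def doneT : Proc := .inp doneN .nil

def bodyApp (t s : Term) : Proc :=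
  .par ((trTN t).lift 1 0)
    (.out cN (.par (.out hdN ((trTN s).lift 1 0)) (.out cN (.pvar 0))))

def bodyLam (t : Term) : Proc :=
  .par (.pvar 0) (.par (.out bN Restart)
    (.inp hdN (.inp bN (((trTN t).lift 1 0).lift 1 2))))

lemma trTN_app (t s : Term) : trTN (.app t s) = .inp cN (bodyApp t s) := rfl
lemma trTN_lam (t : Term) : trTN (.lam t) = .inp cN (bodyLam t) := rfl

def H1 (t : Term) (π : Stack) : Proc :=
  .inp hdN (.inp bN ((((trTN t).lift 1 0).lift 1 2).subst 2 (trStkN π)))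

def H1b (t s : Term) (π0 : Stack) : Proc :=
  .inp bN (((((trTN t).lift 1 0).lift 1 2).subst 2 (trStkN π0)).subst 1 (trTN s))

def H2c : Proc := .inp hdN (.inp bN (Choice (.pvar 1)))

def CT (t : Term) : Proc := (Choice (.pvar 1)).subst 1 (trTN t)

def ChA (t : Term) : Proc :=
  .inp enterN (.inp cN (.par ((trTN t).lift 2 0) (.out cN trMt)))

def ChB : Proc := .inp skipN (.out initN .nil)

def chRecv : Proc := .inp chN (.inp chN (.pvar 1))

def shEV (t : Term) (π : Stack) (n : ℕ) : Proc := trNConf (.ev t π n)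
def shCONT (π : Stack) (n : ℕ) : Proc := trNConf (.cont π n)
def shL1 (t : Term) (π : Stack) (n : ℕ) : Proc :=
  .par (trStkN π) (.par (.out bN Restart) (.par (H1 t π) (BBn n)))
def shL2 (t s : Term) (π : Stack) (n : ℕ) : Proc :=
  .par (.out cN (trStkN π)) (.par (.out bN Restart)
    (.par (H1b t s (.cons s π)) (BBn n)))
def shL3 (t : Term) (n : ℕ) : Proc := .par Restart (.par (H1 t .nil) (BBn n))
def shC1 (π : Stack) (n : ℕ) : Proc :=
  .par (trStkN π) (.par (.out bN doneT) (.par H2c (BBn n)))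
def shC2 (t : Term) (π : Stack) (n : ℕ) : Proc :=
  .par (.out cN (trStkN π)) (.par (.out bN doneT) (.par (.inp bN (CT t)) (BBn n)))
def shD (n : ℕ) : Proc := .par doneT (.par H2c (BBn n))
def shCH (t : Term) (π : Stack) (n : ℕ) : Proc := ChoiceConfig t π n
def shCHa (t : Term) (π : Stack) (n : ℕ) : Proc :=
  .par (.inp chN ((ChA t).lift 1 0)) (.par (.out chN ChB)
    (.par (.out cN (trStkN π)) (BBn n)))
def shCHb (t : Term) (π : Stack) (n : ℕ) : Proc :=
  .par (.inp chN (ChB.lift 1 0)) (.par (.out chN (ChA t))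
    (.par (.out cN (trStkN π)) (BBn n)))
def shRA (t : Term) (π : Stack) (n : ℕ) : Proc :=
  .par (ChA t) (.par (.out cN (trStkN π)) (BBn n))
def shRB (π : Stack) (n : ℕ) : Proc :=
  .par ChB (.par (.out cN (trStkN π)) (BBn n))

/-- The shapes of machine processes reachable by internal steps from a
translated configuration. -/
inductive SSh : Proc → Prop
  | ev (t : Term) (π : Stack) (n : ℕ) : SSh (shEV t π n)
  | cont (π : Stack) (n : ℕ) : SSh (shCONT π n)
  | l1 (t : Term) (π : Stack) (n : ℕ) : SSh (shL1 t π n)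
  | l2 (t s : Term) (π : Stack) (n : ℕ) : SSh (shL2 t s π n)
  | l3 (t : Term) (n : ℕ) : SSh (shL3 t n)
  | c1 (π : Stack) (n : ℕ) : SSh (shC1 π n)
  | c2 (t : Term) (π : Stack) (n : ℕ) : SSh (shC2 t π n)
  | d (n : ℕ) : SSh (shD n)
  | ch (t : Term) (π : Stack) (n : ℕ) : SSh (shCH t π n)
  | cha (t : Term) (π : Stack) (n : ℕ) : SSh (shCHa t π n)
  | chb (t : Term) (π : Stack) (n : ℕ) : SSh (shCHb t π n)
  | ra (t : Term) (π : Stack) (n : ℕ) : SSh (shRA t π n)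
  | rb (π : Stack) (n : ℕ) : SSh (shRB π n)

/-- Machine states: processes congruent to a shape. -/
def SS (X : Proc) : Prop := ∃ Z, SSh Z ∧ SCong X Z

/-! #### Thread multisets of the shapes -/

lemma tms_shEV_fvar (f : ℕ) (π : Stack) (n : ℕ) :
    tms (shEV (.fvar f) π n) =
      trFV f ::ₘ .out cN (trStkN π) ::ₘ .out kN (trFV n) ::ₘ RecP ::ₘ
        {.out recN RecP} := by
  cases f <;> rfl

lemma tms_shEV_bvar (j : ℕ) (π : Stack) (n : ℕ) :
    tms (shEV (.bvar j) π n) =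
      Proc.pvar j ::ₘ .out cN (trStkN π) ::ₘ .out kN (trFV n) ::ₘ RecP ::ₘ
        {.out recN RecP} := rfl

lemma tms_shEV_app (t s : Term) (π : Stack) (n : ℕ) :
    tms (shEV (.app t s) π n) =
      .inp cN (bodyApp t s) ::ₘ .out cN (trStkN π) ::ₘ .out kN (trFV n) ::ₘ RecP ::ₘ
        {.out recN RecP} := rfl

lemma tms_shEV_lam (t : Term) (π : Stack) (n : ℕ) :
    tms (shEV (.lam t) π n) =
      .inp cN (bodyLam t) ::ₘ .out cN (trStkN π) ::ₘ .out kN (trFV n) ::ₘ RecP ::ₘ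
        {.out recN RecP} := rfl

lemma tms_shCONT (π : Stack) (n : ℕ) :
    tms (shCONT π n) =
      .out cN (trStkN π) ::ₘ .out kN (trFV n) ::ₘ ContP ::ₘ RecP ::ₘ
        {.out recN RecP} := rfl

lemma tms_shL1_nil (t : Term) (n : ℕ) :
    tms (shL1 t .nil n) =
      trMt ::ₘ .out bN Restart ::ₘ H1 t .nil ::ₘ .out kN (trFV n) ::ₘ RecP ::ₘ
        {.out recN RecP} := rfl

lemma tms_shL1_cons (t s : Term) (π : Stack) (n : ℕ) :
    tms (shL1 t (.cons s π) n) =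
      .out hdN (trTN s) ::ₘ .out cN (trStkN π) ::ₘ .out bN Restart ::ₘ
        H1 t (.cons s π) ::ₘ .out kN (trFV n) ::ₘ RecP ::ₘ {.out recN RecP} := rfl

lemma tms_shL2 (t s : Term) (π : Stack) (n : ℕ) :
    tms (shL2 t s π n) =
      .out cN (trStkN π) ::ₘ .out bN Restart ::ₘ H1b t s (.cons s π) ::ₘ
        .out kN (trFV n) ::ₘ RecP ::ₘ {.out recN RecP} := rfl

lemma tms_shL3 (t : Term) (n : ℕ) :
    tms (shL3 t n) =
      Restart ::ₘ H1 t .nil ::ₘ .out kN (trFV n) ::ₘ RecP ::ₘ {.out recN RecP} := rfl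

lemma tms_shC1_nil (n : ℕ) :
    tms (shC1 .nil n) =
      trMt ::ₘ .out bN doneT ::ₘ H2c ::ₘ .out kN (trFV n) ::ₘ RecP ::ₘ
        {.out recN RecP} := rfl

lemma tms_shC1_cons (t : Term) (π : Stack) (n : ℕ) :
    tms (shC1 (.cons t π) n) =
      .out hdN (trTN t) ::ₘ .out cN (trStkN π) ::ₘ .out bN doneT ::ₘ H2c ::ₘ
        .out kN (trFV n) ::ₘ RecP ::ₘ {.out recN RecP} := rfl

lemma tms_shC2 (t : Term) (π : Stack) (n : ℕ) :
    tms (shC2 t π n) =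
      .out cN (trStkN π) ::ₘ .out bN doneT ::ₘ .inp bN (CT t) ::ₘ
        .out kN (trFV n) ::ₘ RecP ::ₘ {.out recN RecP} := rfl

lemma tms_shD (n : ℕ) :
    tms (shD n) =
      doneT ::ₘ H2c ::ₘ .out kN (trFV n) ::ₘ RecP ::ₘ {.out recN RecP} := rfl

lemma tms_shCH (t : Term) (π : Stack) (n : ℕ) :
    tms (shCH t π n) =
      .out chN (ChA t) ::ₘ .out chN ChB ::ₘ chRecv ::ₘ .out cN (trStkN π) ::ₘ
        .out kN (trFV n) ::ₘ RecP ::ₘ {.out recN RecP} := rfl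

lemma tms_shCHa (t : Term) (π : Stack) (n : ℕ) :
    tms (shCHa t π n) =
      .inp chN ((ChA t).lift 1 0) ::ₘ .out chN ChB ::ₘ .out cN (trStkN π) ::ₘ
        .out kN (trFV n) ::ₘ RecP ::ₘ {.out recN RecP} := rfl

lemma tms_shCHb (t : Term) (π : Stack) (n : ℕ) :
    tms (shCHb t π n) =
      .inp chN (ChB.lift 1 0) ::ₘ .out chN (ChA t) ::ₘ .out cN (trStkN π) ::ₘ
        .out kN (trFV n) ::ₘ RecP ::ₘ {.out recN RecP} := rfl

lemma tms_shRA (t : Term) (π : Stack) (n : ℕ) :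
    tms (shRA t π n) =
      ChA t ::ₘ .out cN (trStkN π) ::ₘ .out kN (trFV n) ::ₘ RecP ::ₘ
        {.out recN RecP} := rfl

lemma tms_shRB (π : Stack) (n : ℕ) :
    tms (shRB π n) =
      ChB ::ₘ .out cN (trStkN π) ::ₘ .out kN (trFV n) ::ₘ RecP ::ₘ
        {.out recN RecP} := rfl

end BEq8

namespace BEq8

open Proc

/-! #### Generic helpers for shape analysis -/

lemma cancel2 {x y : Proc} {m m' : Multiset Proc}
    (h : x ::ₘ y ::ₘ m = x ::ₘ y ::ₘ m') : m = m' :=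
  (Multiset.cons_inj_right y).1 ((Multiset.cons_inj_right x).1 h)

lemma scong_succ {W Z : Proc} {M : Multiset Proc}
    (h : Multiset.Rel TR (tms W) M) (he : M = tms Z) : SCong W Z :=
  scong_of_rel (by rwa [he] at h)

lemma mem_out_of_decomp {X : Proc} {a : Name} {R B : Proc} {m : Multiset Proc}
    (h : tms X = .out a R ::ₘ .inp a B ::ₘ m) : (Proc.out a R) ∈ tms X := by
  rw [h]; exact Multiset.mem_cons_self _ _

lemma mem_inp_of_decomp {X : Proc} {a : Name} {R B : Proc} {m : Multiset Proc}
    (h : tms X = .out a R ::ₘ .inp a B ::ₘ m) : (Proc.inp a B) ∈ tms X := by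
  rw [h]; exact Multiset.mem_cons_of_mem (Multiset.mem_cons_self _ _)

lemma tms_trFV (f : ℕ) : tms (trFV f) = {trFV f} := by cases f <;> rfl

lemma tms_trTN (t : Term) : tms (trTN t) = {trTN t} := by
  cases t with
  | fvar f => exact tms_trFV f
  | bvar j => rfl
  | lam t => rfl
  | app t s => rfl

lemma tms_shEV' (t : Term) (π : Stack) (n : ℕ) :
    tms (shEV t π n) =
      trTN t ::ₘ .out cN (trStkN π) ::ₘ .out kN (trFV n) ::ₘ RecP ::ₘ
        {.out recN RecP} := by
  cases t with
  | fvar f => cases f <;> rfl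
  | bvar j => rfl
  | lam t => rfl
  | app t s => rfl


lemma tau_decomp {Z W : Proc} (h : Step Z .tau W) :
    ∃ a R B m, (Proc.out a R ∈ tms Z) ∧ (Proc.inp a B ∈ tms Z) ∧
      tms Z = .out a R ::ₘ .inp a B ::ₘ m ∧
      Multiset.Rel TR (tms W) (tms (B.subst 0 R) + m) := by
  obtain ⟨a, R, B, m, h1, h2⟩ := step_tau_inv h
  exact ⟨a, R, B, m, mem_out_of_decomp h1, mem_inp_of_decomp h1, h1, h2⟩

lemma tms_RecP : tms RecP = {RecP} := rfl
lemma tms_ContP : tms ContP = {ContP} := rfl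
lemma tms_Restart : tms Restart = {Restart} := rfl
lemma tms_H1 (t : Term) (π : Stack) : tms (H1 t π) = {H1 t π} := rfl
lemma tms_H1b (t s : Term) (π : Stack) : tms (H1b t s π) = {H1b t s π} := rfl
lemma tms_H2c : tms H2c = {H2c} := rfl
lemma tms_doneT : tms doneT = {doneT} := rfl
lemma tms_trMt : tms trMt = {trMt} := rfl
lemma tms_ChA (t : Term) : tms (ChA t) = {ChA t} := rfl
lemma tms_ChB : tms ChB = {ChB} := rfl
lemma tms_chRecv : tms chRecv = {chRecv} := rfl

lemma trFV_ne_out (f : ℕ) (a : Name) (R : Proc) : trFV f ≠ Proc.out a R := by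
  cases f <;> simp [trFV]

lemma trFV_inp_name {f : ℕ} {a : Name} {B : Proc} (h : trFV f = Proc.inp a B) :
    a = sucN ∨ a = zN := by
  cases f with
  | zero => simp [trFV] at h; exact Or.inr h.1.symm
  | succ g => simp [trFV] at h; exact Or.inl h.1.symm

/-- Push. -/
lemma shEV_app_tau (t s : Term) (π : Stack) (n : ℕ) {W : Proc}
    (h : Step (shEV (.app t s) π n) .tau W) :
    SCong W (shEV t (.cons s π) n) := by
  obtain ⟨a, R, B, m, hmo, hmi, h1, h2⟩ := tau_decomp h
  rw [tms_shEV_app] at hmo hmi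
  simp only [Multiset.mem_cons, Multiset.mem_singleton, RecP,
    Proc.out.injEq, Proc.inp.injEq, reduceCtorEq, false_or, or_false] at hmo hmi
  obtain ⟨ha, hB⟩ : a = cN ∧ B = bodyApp t s := by
    rcases hmi with ⟨ha, hB⟩ | ⟨ha, hB⟩
    · exact ⟨ha, hB⟩
    · exfalso
      rcases hmo with ⟨h', _⟩ | ⟨h', _⟩ | ⟨h', _⟩ <;>
        exact absurd (ha.symm.trans h') (by decide)
  subst ha
  obtain hR : R = trStkN π := by
    rcases hmo with ⟨h', hR⟩ | ⟨h', _⟩ | ⟨h', _⟩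
    · exact hR
    · exact absurd h' (by decide)
    · exact absurd h' (by decide)
  subst hR hB
  have hX : tms (shEV (.app t s) π n) = Proc.out cN (trStkN π) ::ₘ
      Proc.inp cN (bodyApp t s) ::ₘ
      (Proc.out kN (trFV n) ::ₘ RecP ::ₘ {.out recN RecP}) := by
    rw [tms_shEV_app, Multiset.cons_swap]
  rw [hX] at h1
  have hm := (cancel2 h1).symm
  have hb : (bodyApp t s).subst 0 (trStkN π)
      = .par (trTN t) (.out cN (trStkN (.cons s π))) := by
    simp [bodyApp, Proc.subst, subst_lift_cancel, lift_zero, trStkN]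
  refine scong_succ h2 ?_
  rw [hb, hm, tms_shEV']
  simp only [tms_par, tms_trTN, tms_out, Multiset.singleton_add,
    Multiset.cons_add, add_assoc]

/-- Start of a Lambda/Grab sequence. -/
lemma shEV_lam_tau (t : Term) (π : Stack) (n : ℕ) {W : Proc}
    (h : Step (shEV (.lam t) π n) .tau W) :
    SCong W (shL1 t π n) := by
  obtain ⟨a, R, B, m, hmo, hmi, h1, h2⟩ := tau_decomp h
  rw [tms_shEV_lam] at hmo hmi
  simp only [Multiset.mem_cons, Multiset.mem_singleton, RecP,
    Proc.out.injEq, Proc.inp.injEq, reduceCtorEq, false_or, or_false] at hmo hmi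
  obtain ⟨ha, hB⟩ : a = cN ∧ B = bodyLam t := by
    rcases hmi with ⟨ha, hB⟩ | ⟨ha, hB⟩
    · exact ⟨ha, hB⟩
    · exfalso
      rcases hmo with ⟨h', _⟩ | ⟨h', _⟩ | ⟨h', _⟩ <;>
        exact absurd (ha.symm.trans h') (by decide)
  subst ha
  obtain hR : R = trStkN π := by
    rcases hmo with ⟨h', hR⟩ | ⟨h', _⟩ | ⟨h', _⟩
    · exact hR
    · exact absurd h' (by decide)
    · exact absurd h' (by decide)
  subst hR hB
  have hX : tms (shEV (.lam t) π n) = Proc.out cN (trStkN π) ::ₘ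
      Proc.inp cN (bodyLam t) ::ₘ
      (Proc.out kN (trFV n) ::ₘ RecP ::ₘ {.out recN RecP}) := by
    rw [tms_shEV_lam, Multiset.cons_swap]
  rw [hX] at h1
  have hm := (cancel2 h1).symm
  have hb : (bodyLam t).subst 0 (trStkN π)
      = .par (trStkN π) (.par (.out bN Restart) (H1 t π)) := by
    simp [bodyLam, H1, Restart, trMt, Proc.subst, lift_zero]
  refine scong_succ h2 ?_
  rw [hb, hm]
  simp only [shL1, BBn, tms_par, tms_H1, tms_RecP,
    tms_out, Multiset.singleton_add, Multiset.cons_add, add_assoc]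

/-- Stable: free variable at the head. -/
lemma shEV_fvar_stable (f : ℕ) (π : Stack) (n : ℕ) {W : Proc}
    (h : Step (shEV (.fvar f) π n) .tau W) : False := by
  obtain ⟨a, R, B, m, hmo, hmi, h1, h2⟩ := tau_decomp h
  rw [tms_shEV_fvar] at hmo hmi
  simp only [Multiset.mem_cons, Multiset.mem_singleton, RecP,
    Proc.out.injEq, Proc.inp.injEq, reduceCtorEq, false_or, or_false] at hmo hmi
  have ha2 : a = sucN ∨ a = zN ∨ a = initN := by
    rcases hmi with h'' | ⟨h2a, _⟩
    · rcases trFV_inp_name h''.symm with hz | hz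
      · exact Or.inl hz
      · exact Or.inr (Or.inl hz)
    · exact Or.inr (Or.inr h2a)
  rcases hmo with h' | ⟨h1a, _⟩ | ⟨h1a, _⟩ | ⟨h1a, _⟩
  · exact trFV_ne_out f a R h'.symm
  all_goals (rcases ha2 with hz | hz | hz <;>
    (rw [hz] at h1a; exact absurd h1a (by decide)))

/-- Stable: stuck process variable at the head. -/
lemma shEV_bvar_stable (j : ℕ) (π : Stack) (n : ℕ) {W : Proc}
    (h : Step (shEV (.bvar j) π n) .tau W) : False := by
  obtain ⟨a, R, B, m, hmo, hmi, h1, h2⟩ := tau_decomp h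
  rw [tms_shEV_bvar] at hmo hmi
  simp only [Multiset.mem_cons, Multiset.mem_singleton, RecP,
    Proc.out.injEq, Proc.inp.injEq, reduceCtorEq, false_or, or_false] at hmo hmi
  obtain ha2 := hmi.1
  rcases hmo with ⟨h1a, _⟩ | ⟨h1a, _⟩ | ⟨h1a, _⟩ <;>
    exact absurd (ha2.symm.trans h1a) (by decide)


/-- The Grab transition of the machine, at the process level. -/
lemma shL2_tau (t s : Term) (π : Stack) (n : ℕ) {W : Proc}
    (h : Step (shL2 t s π n) .tau W) :
    SCong W (shEV (t.substT 0 s) π n) := by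
  obtain ⟨a, R, B, m, h1, h2⟩ := step_tau_inv h
  have hmo := mem_out_of_decomp h1
  have hmi := mem_inp_of_decomp h1
  rw [tms_shL2] at hmo hmi
  simp only [Multiset.mem_cons, Multiset.mem_singleton, H1b, RecP,
    Proc.out.injEq, Proc.inp.injEq, reduceCtorEq, false_or, or_false] at hmo hmi
  obtain ⟨ha, hB⟩ : a = bN ∧ B = ((((trTN t).lift 1 0).lift 1 2).subst 2
      (trStkN (.cons s π))).subst 1 (trTN s) := by
    rcases hmi with ⟨ha, hB⟩ | ⟨ha, hB⟩
    · exact ⟨ha, hB⟩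
    · exfalso
      rcases hmo with ⟨h', _⟩ | ⟨h', _⟩ | ⟨h', _⟩ | ⟨h', _⟩ <;>
        (rw [h'] at ha; exact absurd ha (by decide))
  subst ha
  obtain ⟨_, hR⟩ : bN = bN ∧ R = Restart := by
    rcases hmo with ⟨h', _⟩ | ⟨h', hR⟩ | ⟨h', _⟩ | ⟨h', _⟩
    · exact absurd h' (by decide)
    · exact ⟨rfl, hR⟩
    · exact absurd h' (by decide)
    · exact absurd h' (by decide)
  subst hR hB
  have hX : tms (shL2 t s π n) = Proc.out bN Restart ::ₘ
      Proc.inp bN (((((trTN t).lift 1 0).lift 1 2).subst 2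
        (trStkN (.cons s π))).subst 1 (trTN s)) ::ₘ
      (Proc.out cN (trStkN π) ::ₘ .out kN (trFV n) ::ₘ RecP ::ₘ
        {.out recN RecP}) := by
    rw [tms_shL2, H1b]
    rw [Multiset.cons_swap (Proc.out cN (trStkN π)) (Proc.out bN Restart)]
    rw [Multiset.cons_swap (Proc.out cN (trStkN π))
      (Proc.inp bN (((((trTN t).lift 1 0).lift 1 2).subst 2
        (trStkN (.cons s π))).subst 1 (trTN s)))]
  rw [hX] at h1
  have hm := (cancel2 h1).symm
  have hb : (((((trTN t).lift 1 0).lift 1 2).subst 2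
      (trStkN (.cons s π))).subst 1 (trTN s)).subst 0 Restart
      = trTN (t.substT 0 s) := by
    rw [grab_identity (trTN t) 0 (trStkN (.cons s π)) (trTN s) Restart,
      ← trTN_subst]
  refine scong_succ h2 ?_
  rw [hb, hm, tms_trTN, tms_shEV']
  rw [Multiset.singleton_add]

end BEq8

namespace BEq8

open Proc

lemma trTN_ne_out (t : Term) (a : Name) (R : Proc) : trTN t ≠ Proc.out a R := by
  cases t with
  | fvar f => exact trFV_ne_out f a R
  | bvar j => simp [trTN]
  | lam t => simp [trTN]
  | app t s => simp [trTN]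

/-- Lambda-machine step: empty stack, Restart released. -/
lemma shL1_nil_tau (t : Term) (n : ℕ) {W : Proc}
    (h : Step (shL1 t .nil n) .tau W) : SCong W (shL3 t n) := by
  obtain ⟨a, R, B, m, hmo, hmi, h1, h2⟩ := tau_decomp h
  rw [tms_shL1_nil] at hmo hmi
  simp only [Multiset.mem_cons, Multiset.mem_singleton, RecP, H1, trMt,
    Proc.out.injEq, Proc.inp.injEq, reduceCtorEq, false_or, or_false] at hmo hmi
  obtain ⟨ha, hB⟩ : a = bN ∧ B = .pvar 0 := by
    rcases hmi with ⟨ha, hB⟩ | ⟨ha, hB⟩ | ⟨ha, hB⟩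
    · exact ⟨ha, hB⟩
    all_goals
      (exfalso
       rcases hmo with ⟨h', _⟩ | ⟨h', _⟩ | ⟨h', _⟩ <;>
         exact absurd (ha.symm.trans h') (by decide))
  subst ha
  obtain hR : R = Restart := by
    rcases hmo with ⟨h', hR⟩ | ⟨h', _⟩ | ⟨h', _⟩
    · exact hR
    · exact absurd h' (by decide)
    · exact absurd h' (by decide)
  subst hR hB
  have hX : tms (shL1 t .nil n) = Proc.out bN Restart ::ₘ Proc.inp bN (.pvar 0) ::ₘ
      (H1 t .nil ::ₘ .out kN (trFV n) ::ₘ RecP ::ₘ {.out recN RecP}) := by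
    rw [tms_shL1_nil]
    rw [Multiset.cons_swap trMt (Proc.out bN Restart)]
    rfl
  rw [hX] at h1
  have hm := (cancel2 h1).symm
  have hb : (Proc.pvar 0).subst 0 Restart = Restart := by
    simp [Proc.subst, lift_zero]
  refine scong_succ h2 ?_
  rw [hb, hm]
  simp only [shL3, BBn, tms_par, tms_Restart, tms_H1, tms_RecP, tms_out,
    Multiset.singleton_add, Multiset.cons_add, add_assoc]

/-- Lambda-machine step: argument handed over. -/
lemma shL1_cons_tau (t s : Term) (π : Stack) (n : ℕ) {W : Proc}
    (h : Step (shL1 t (.cons s π) n) .tau W) : SCong W (shL2 t s π n) := by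
  obtain ⟨a, R, B, m, hmo, hmi, h1, h2⟩ := tau_decomp h
  rw [tms_shL1_cons] at hmo hmi
  simp only [Multiset.mem_cons, Multiset.mem_singleton, RecP, H1,
    Proc.out.injEq, Proc.inp.injEq, reduceCtorEq, false_or, or_false] at hmo hmi
  obtain ⟨ha, hB⟩ : a = hdN ∧
      B = .inp bN ((((trTN t).lift 1 0).lift 1 2).subst 2 (trStkN (.cons s π))) := by
    rcases hmi with ⟨ha, hB⟩ | ⟨ha, hB⟩
    · exact ⟨ha, hB⟩
    · exfalso
      rcases hmo with ⟨h', _⟩ | ⟨h', _⟩ | ⟨h', _⟩ | ⟨h', _⟩ | ⟨h', _⟩ <;>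
        exact absurd (ha.symm.trans h') (by decide)
  subst ha
  obtain hR : R = trTN s := by
    rcases hmo with ⟨h', hR⟩ | ⟨h', _⟩ | ⟨h', _⟩ | ⟨h', _⟩ | ⟨h', _⟩
    · exact hR
    all_goals exact absurd h' (by decide)
  subst hR hB
  have hX : tms (shL1 t (.cons s π) n) = Proc.out hdN (trTN s) ::ₘ
      Proc.inp hdN ((.inp bN ((((trTN t).lift 1 0).lift 1 2).subst 2
        (trStkN (.cons s π))))) ::ₘ
      (Proc.out cN (trStkN π) ::ₘ .out bN Restart ::ₘ .out kN (trFV n) ::ₘ RecP ::ₘ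
        {.out recN RecP}) := by
    rw [tms_shL1_cons]
    rw [Multiset.cons_swap (Proc.out bN Restart) (H1 t (.cons s π))]
    rw [Multiset.cons_swap (Proc.out cN (trStkN π)) (H1 t (.cons s π))]
    rfl
  rw [hX] at h1
  have hm := (cancel2 h1).symm
  have hb : (Proc.inp bN ((((trTN t).lift 1 0).lift 1 2).subst 2
      (trStkN (.cons s π)))).subst 0 (trTN s) = H1b t s (.cons s π) := by
    simp only [Proc.subst, H1b]
  refine scong_succ h2 ?_
  rw [hb, hm]
  simp only [shL2, BBn, tms_par, tms_H1b, tms_RecP, tms_out,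
    Multiset.singleton_add, Multiset.cons_add, add_assoc]
  rw [Multiset.cons_swap (H1b t s (.cons s π)) (Proc.out cN (trStkN π))]
  rw [Multiset.cons_swap (H1b t s (.cons s π)) (Proc.out bN Restart)]

/-- Continuation: Cont grabs the stack. -/
lemma PB_Choice_pvar1 : PB 2 (Choice (.pvar 1)) := by
  simp [Choice, choicePlus, Proc.lift, trMt, PB]

lemma shCONT_tau (π : Stack) (n : ℕ) {W : Proc}
    (h : Step (shCONT π n) .tau W) : SCong W (shC1 π n) := by
  obtain ⟨a, R, B, m, hmo, hmi, h1, h2⟩ := tau_decomp h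
  rw [tms_shCONT] at hmo hmi
  simp only [Multiset.mem_cons, Multiset.mem_singleton, RecP, ContP,
    Proc.out.injEq, Proc.inp.injEq, reduceCtorEq, false_or, or_false] at hmo hmi
  obtain ⟨ha, hB⟩ : a = cN ∧ B = .par (.pvar 0) (.par (.out bN (.inp doneN .nil))
      (.inp hdN (.inp bN (Choice (.pvar 1))))) := by
    rcases hmi with ⟨ha, hB⟩ | ⟨ha, hB⟩
    · exact ⟨ha, hB⟩
    · exfalso
      rcases hmo with ⟨h', _⟩ | ⟨h', _⟩ | ⟨h', _⟩ <;>
        exact absurd (ha.symm.trans h') (by decide)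
  subst ha
  obtain hR : R = trStkN π := by
    rcases hmo with ⟨h', hR⟩ | ⟨h', _⟩ | ⟨h', _⟩
    · exact hR
    all_goals exact absurd h' (by decide)
  subst hR hB
  have hX : tms (shCONT π n) = Proc.out cN (trStkN π) ::ₘ
      Proc.inp cN (.par (.pvar 0) (.par (.out bN (.inp doneN .nil))
        (.inp hdN (.inp bN (Choice (.pvar 1)))))) ::ₘ
      (Proc.out kN (trFV n) ::ₘ RecP ::ₘ {.out recN RecP}) := by
    rw [tms_shCONT]
    rw [Multiset.cons_swap (Proc.out kN (trFV n)) ContP]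
    rfl
  rw [hX] at h1
  have hm := (cancel2 h1).symm
  have hb : (Proc.par (.pvar 0) (.par (.out bN (.inp doneN .nil))
      (.inp hdN (.inp bN (Choice (.pvar 1)))))).subst 0 (trStkN π)
      = .par (trStkN π) (.par (.out bN doneT) H2c) := by
    simp [Proc.subst, Proc.lift, lift_zero, doneT, H2c, Choice, choicePlus, trMt]
  refine scong_succ h2 ?_
  rw [hb, hm]
  simp only [shC1, BBn, tms_par, tms_H2c, tms_RecP, tms_doneT, tms_out,
    Multiset.singleton_add, Multiset.cons_add, add_assoc]

/-- Continuation with empty stack: done flag released. -/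
lemma shC1_nil_tau (n : ℕ) {W : Proc}
    (h : Step (shC1 .nil n) .tau W) : SCong W (shD n) := by
  obtain ⟨a, R, B, m, hmo, hmi, h1, h2⟩ := tau_decomp h
  rw [tms_shC1_nil] at hmo hmi
  simp only [Multiset.mem_cons, Multiset.mem_singleton, RecP, H2c, trMt,
    Proc.out.injEq, Proc.inp.injEq, reduceCtorEq, false_or, or_false] at hmo hmi
  obtain ⟨ha, hB⟩ : a = bN ∧ B = .pvar 0 := by
    rcases hmi with ⟨ha, hB⟩ | ⟨ha, hB⟩ | ⟨ha, hB⟩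
    · exact ⟨ha, hB⟩
    all_goals
      (exfalso
       rcases hmo with ⟨h', _⟩ | ⟨h', _⟩ | ⟨h', _⟩ <;>
         exact absurd (ha.symm.trans h') (by decide))
  subst ha
  obtain hR : R = doneT := by
    rcases hmo with ⟨h', hR⟩ | ⟨h', _⟩ | ⟨h', _⟩
    · exact hR
    all_goals exact absurd h' (by decide)
  subst hR hB
  have hX : tms (shC1 .nil n) = Proc.out bN doneT ::ₘ Proc.inp bN (.pvar 0) ::ₘ
      (H2c ::ₘ .out kN (trFV n) ::ₘ RecP ::ₘ {.out recN RecP}) := by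
    rw [tms_shC1_nil]
    rw [Multiset.cons_swap trMt (Proc.out bN doneT)]
    rfl
  rw [hX] at h1
  have hm := (cancel2 h1).symm
  have hb : (Proc.pvar 0).subst 0 doneT = doneT := by
    simp [Proc.subst, lift_zero]
  refine scong_succ h2 ?_
  rw [hb, hm]
  simp only [shD, BBn, tms_par, tms_doneT, tms_H2c, tms_RecP, tms_out,
    Multiset.singleton_add, Multiset.cons_add, add_assoc]

/-- Continuation with non-empty stack: head handed to Choice. -/
lemma shC1_cons_tau (t : Term) (π : Stack) (n : ℕ) {W : Proc}
    (h : Step (shC1 (.cons t π) n) .tau W) : SCong W (shC2 t π n) := by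
  obtain ⟨a, R, B, m, hmo, hmi, h1, h2⟩ := tau_decomp h
  rw [tms_shC1_cons] at hmo hmi
  simp only [Multiset.mem_cons, Multiset.mem_singleton, RecP, H2c,
    Proc.out.injEq, Proc.inp.injEq, reduceCtorEq, false_or, or_false] at hmo hmi
  obtain ⟨ha, hB⟩ : a = hdN ∧ B = .inp bN (Choice (.pvar 1)) := by
    rcases hmi with ⟨ha, hB⟩ | ⟨ha, hB⟩
    · exact ⟨ha, hB⟩
    · exfalso
      rcases hmo with ⟨h', _⟩ | ⟨h', _⟩ | ⟨h', _⟩ | ⟨h', _⟩ | ⟨h', _⟩ <;>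
        exact absurd (ha.symm.trans h') (by decide)
  subst ha
  obtain hR : R = trTN t := by
    rcases hmo with ⟨h', hR⟩ | ⟨h', _⟩ | ⟨h', _⟩ | ⟨h', _⟩ | ⟨h', _⟩
    · exact hR
    all_goals exact absurd h' (by decide)
  subst hR hB
  have hX : tms (shC1 (.cons t π) n) = Proc.out hdN (trTN t) ::ₘ
      Proc.inp hdN (.inp bN (Choice (.pvar 1))) ::ₘ
      (Proc.out cN (trStkN π) ::ₘ .out bN doneT ::ₘ .out kN (trFV n) ::ₘ RecP ::ₘ
        {.out recN RecP}) := by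
    rw [tms_shC1_cons]
    rw [Multiset.cons_swap (Proc.out bN doneT) H2c]
    rw [Multiset.cons_swap (Proc.out cN (trStkN π)) H2c]
    rfl
  rw [hX] at h1
  have hm := (cancel2 h1).symm
  have hb : (Proc.inp bN (Choice (.pvar 1))).subst 0 (trTN t) = .inp bN (CT t) := rfl
  refine scong_succ h2 ?_
  rw [hb, hm]
  simp only [shC2, BBn, tms_par, tms_doneT, tms_RecP, tms_inp, tms_out,
    Multiset.singleton_add, Multiset.cons_add, add_assoc]
  rw [Multiset.cons_swap (Proc.inp bN (CT t)) (Proc.out cN (trStkN π))]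
  rw [Multiset.cons_swap (Proc.inp bN (CT t)) (Proc.out bN doneT)]

end BEq8

namespace BEq8

open Proc

/-- Key computation: handing the done-guard to the choice context yields the
choice process. -/
lemma CT_subst (t : Term) : (CT t).subst 0 doneT = Choice (trTN t) := by
  have h1 : Proc.subst ((trTN t).lift 3 0) 2 (Proc.inp doneN .nil) = (trTN t).lift 2 0 :=
    subst_lift_lower (trTN t) 2 0 2 _ (by omega) (by omega)
  simp [CT, Choice, choicePlus, trMt, doneT, Proc.subst, Proc.lift, h1]

/-- Choice released. -/
lemma shC2_tau (t : Term) (π : Stack) (n : ℕ) {W : Proc}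
    (h : Step (shC2 t π n) .tau W) : SCong W (shCH t π n) := by
  obtain ⟨a, R, B, m, hmo, hmi, h1, h2⟩ := tau_decomp h
  rw [tms_shC2] at hmo hmi
  simp only [Multiset.mem_cons, Multiset.mem_singleton, RecP,
    Proc.out.injEq, Proc.inp.injEq, reduceCtorEq, false_or, or_false] at hmo hmi
  obtain ⟨ha, hB⟩ : a = bN ∧ B = CT t := by
    rcases hmi with ⟨ha, hB⟩ | ⟨ha, hB⟩
    · exact ⟨ha, hB⟩
    · exfalso
      rcases hmo with ⟨h', _⟩ | ⟨h', _⟩ | ⟨h', _⟩ | ⟨h', _⟩ <;>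
        exact absurd (ha.symm.trans h') (by decide)
  subst ha
  obtain hR : R = doneT := by
    rcases hmo with ⟨h', _⟩ | ⟨h', hR⟩ | ⟨h', _⟩ | ⟨h', _⟩
    · exact absurd h' (by decide)
    · exact hR
    all_goals exact absurd h' (by decide)
  subst hR hB
  have hX : tms (shC2 t π n) = Proc.out bN doneT ::ₘ Proc.inp bN (CT t) ::ₘ
      (Proc.out cN (trStkN π) ::ₘ .out kN (trFV n) ::ₘ RecP ::ₘ
        {.out recN RecP}) := by
    rw [tms_shC2]
    rw [Multiset.cons_swap (Proc.out cN (trStkN π)) (Proc.out bN doneT)]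
    rw [Multiset.cons_swap (Proc.out cN (trStkN π)) (Proc.inp bN (CT t))]
  rw [hX] at h1
  have hm := (cancel2 h1).symm
  refine scong_succ h2 ?_
  rw [CT_subst, hm]
  have hCH : tms (shCH t π n) = tms (Choice (trTN t)) +
      (Proc.out cN (trStkN π) ::ₘ .out kN (trFV n) ::ₘ RecP ::ₘ
        {.out recN RecP}) := rfl
  rw [hCH]

/-- Choice resolution: two possible steps. -/
lemma shCH_tau (t : Term) (π : Stack) (n : ℕ) {W : Proc}
    (h : Step (shCH t π n) .tau W) :
    SCong W (shCHa t π n) ∨ SCong W (shCHb t π n) := by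
  obtain ⟨a, R, B, m, hmo, hmi, h1, h2⟩ := tau_decomp h
  rw [tms_shCH] at hmo hmi
  simp only [Multiset.mem_cons, Multiset.mem_singleton, RecP, chRecv,
    Proc.out.injEq, Proc.inp.injEq, reduceCtorEq, false_or, or_false] at hmo hmi
  obtain ⟨ha, hB⟩ : a = chN ∧ B = .inp chN (.pvar 1) := by
    rcases hmi with ⟨ha, hB⟩ | ⟨ha, hB⟩
    · exact ⟨ha, hB⟩
    · exfalso
      rcases hmo with ⟨h', _⟩ | ⟨h', _⟩ | ⟨h', _⟩ | ⟨h', _⟩ | ⟨h', _⟩ <;>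
        exact absurd (ha.symm.trans h') (by decide)
  subst ha
  obtain hR : R = ChA t ∨ R = ChB := by
    rcases hmo with ⟨h', hR⟩ | ⟨h', hR⟩ | ⟨h', _⟩ | ⟨h', _⟩ | ⟨h', _⟩
    · exact Or.inl hR
    · exact Or.inr hR
    all_goals exact absurd h' (by decide)
  subst hB
  have hbody : ∀ X : Proc, (Proc.inp chN (.pvar 1)).subst 0 X
      = .inp chN (X.lift 1 0) := by
    intro X
    simp [Proc.subst]
  rcases hR with hR | hR <;> subst hR
  · left
    have hX : tms (shCH t π n) = Proc.out chN (ChA t) ::ₘ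
        Proc.inp chN (.inp chN (.pvar 1)) ::ₘ
        (Proc.out chN ChB ::ₘ .out cN (trStkN π) ::ₘ .out kN (trFV n) ::ₘ RecP ::ₘ
          {.out recN RecP}) := by
      rw [tms_shCH]
      rw [Multiset.cons_swap (Proc.out chN ChB) chRecv]
      rfl
    rw [hX] at h1
    have hm := (cancel2 h1).symm
    refine scong_succ h2 ?_
    rw [hbody, hm]
    simp only [shCHa, BBn, tms_par, tms_inp, tms_out, tms_RecP,
      Multiset.singleton_add, Multiset.cons_add, add_assoc]
  · right
    have hX : tms (shCH t π n) = Proc.out chN ChB ::ₘ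
        Proc.inp chN (.inp chN (.pvar 1)) ::ₘ
        (Proc.out chN (ChA t) ::ₘ .out cN (trStkN π) ::ₘ .out kN (trFV n) ::ₘ RecP ::ₘ
          {.out recN RecP}) := by
      rw [tms_shCH]
      rw [Multiset.cons_swap (Proc.out chN (ChA t)) (Proc.out chN ChB)]
      rw [Multiset.cons_swap (Proc.out chN (ChA t)) chRecv]
      rfl
    rw [hX] at h1
    have hm := (cancel2 h1).symm
    refine scong_succ h2 ?_
    rw [hbody, hm]
    simp only [shCHb, BBn, tms_par, tms_inp, tms_out, tms_RecP,
      Multiset.singleton_add, Multiset.cons_add, add_assoc]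

/-- First branch resolved. -/
lemma shCHa_tau (t : Term) (π : Stack) (n : ℕ) {W : Proc}
    (h : Step (shCHa t π n) .tau W) : SCong W (shRA t π n) := by
  obtain ⟨a, R, B, m, hmo, hmi, h1, h2⟩ := tau_decomp h
  rw [tms_shCHa] at hmo hmi
  simp only [Multiset.mem_cons, Multiset.mem_singleton, RecP,
    Proc.out.injEq, Proc.inp.injEq, reduceCtorEq, false_or, or_false] at hmo hmi
  obtain ⟨ha, hB⟩ : a = chN ∧ B = (ChA t).lift 1 0 := by
    rcases hmi with ⟨ha, hB⟩ | ⟨ha, hB⟩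
    · exact ⟨ha, hB⟩
    · exfalso
      rcases hmo with ⟨h', _⟩ | ⟨h', _⟩ | ⟨h', _⟩ | ⟨h', _⟩ <;>
        exact absurd (ha.symm.trans h') (by decide)
  subst ha
  obtain hR : R = ChB := by
    rcases hmo with ⟨h', hR⟩ | ⟨h', _⟩ | ⟨h', _⟩ | ⟨h', _⟩
    · exact hR
    all_goals exact absurd h' (by decide)
  subst hR hB
  have hX : tms (shCHa t π n) = Proc.out chN ChB ::ₘ
      Proc.inp chN ((ChA t).lift 1 0) ::ₘ
      (Proc.out cN (trStkN π) ::ₘ .out kN (trFV n) ::ₘ RecP ::ₘ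
        {.out recN RecP}) := by
    rw [tms_shCHa]
    rw [Multiset.cons_swap (Proc.inp chN ((ChA t).lift 1 0)) (Proc.out chN ChB)]
  rw [hX] at h1
  have hm := (cancel2 h1).symm
  refine scong_succ h2 ?_
  rw [subst_lift_cancel (ChA t) ChB 0, hm]
  simp only [shRA, BBn, tms_par, tms_ChA, tms_out, tms_RecP,
    Multiset.singleton_add, Multiset.cons_add, add_assoc]

/-- Second branch resolved. -/
lemma shCHb_tau (t : Term) (π : Stack) (n : ℕ) {W : Proc}
    (h : Step (shCHb t π n) .tau W) : SCong W (shRB π n) := by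
  obtain ⟨a, R, B, m, hmo, hmi, h1, h2⟩ := tau_decomp h
  rw [tms_shCHb] at hmo hmi
  simp only [Multiset.mem_cons, Multiset.mem_singleton, RecP,
    Proc.out.injEq, Proc.inp.injEq, reduceCtorEq, false_or, or_false] at hmo hmi
  obtain ⟨ha, hB⟩ : a = chN ∧ B = ChB.lift 1 0 := by
    rcases hmi with ⟨ha, hB⟩ | ⟨ha, hB⟩
    · exact ⟨ha, hB⟩
    · exfalso
      rcases hmo with ⟨h', _⟩ | ⟨h', _⟩ | ⟨h', _⟩ | ⟨h', _⟩ <;>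
        exact absurd (ha.symm.trans h') (by decide)
  subst ha
  obtain hR : R = ChA t := by
    rcases hmo with ⟨h', hR⟩ | ⟨h', _⟩ | ⟨h', _⟩ | ⟨h', _⟩
    · exact hR
    all_goals exact absurd h' (by decide)
  subst hR hB
  have hX : tms (shCHb t π n) = Proc.out chN (ChA t) ::ₘ
      Proc.inp chN (ChB.lift 1 0) ::ₘ
      (Proc.out cN (trStkN π) ::ₘ .out kN (trFV n) ::ₘ RecP ::ₘ
        {.out recN RecP}) := by
    rw [tms_shCHb]
    rw [Multiset.cons_swap (Proc.inp chN (ChB.lift 1 0)) (Proc.out chN (ChA t))]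
  rw [hX] at h1
  have hm := (cancel2 h1).symm
  refine scong_succ h2 ?_
  rw [subst_lift_cancel ChB (ChA t) 0, hm]
  simp only [shRB, BBn, tms_par, tms_ChB, tms_out, tms_RecP,
    Multiset.singleton_add, Multiset.cons_add, add_assoc]

/-- Stable shapes. -/
lemma shL3_stable (t : Term) (n : ℕ) {W : Proc}
    (h : Step (shL3 t n) .tau W) : False := by
  obtain ⟨a, R, B, m, hmo, hmi, h1, h2⟩ := tau_decomp h
  rw [tms_shL3] at hmo hmi
  simp only [Multiset.mem_cons, Multiset.mem_singleton, RecP, H1, Restart,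
    Proc.out.injEq, Proc.inp.injEq, reduceCtorEq, false_or, or_false] at hmo hmi
  have ha : a = lamN ∨ a = hdN ∨ a = initN := by
    rcases hmi with ⟨ha, _⟩ | ⟨ha, _⟩ | ⟨ha, _⟩
    · exact Or.inl ha
    · exact Or.inr (Or.inl ha)
    · exact Or.inr (Or.inr ha)
  rcases hmo with ⟨h', _⟩ | ⟨h', _⟩ <;>
    (rcases ha with hz | hz | hz <;> exact absurd (hz.symm.trans h') (by decide))

lemma shD_stable (n : ℕ) {W : Proc}
    (h : Step (shD n) .tau W) : False := by
  obtain ⟨a, R, B, m, hmo, hmi, h1, h2⟩ := tau_decomp h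
  rw [tms_shD] at hmo hmi
  simp only [Multiset.mem_cons, Multiset.mem_singleton, RecP, H2c, doneT,
    Proc.out.injEq, Proc.inp.injEq, reduceCtorEq, false_or, or_false] at hmo hmi
  have ha : a = doneN ∨ a = hdN ∨ a = initN := by
    rcases hmi with ⟨ha, _⟩ | ⟨ha, _⟩ | ⟨ha, _⟩
    · exact Or.inl ha
    · exact Or.inr (Or.inl ha)
    · exact Or.inr (Or.inr ha)
  rcases hmo with ⟨h', _⟩ | ⟨h', _⟩ <;>
    (rcases ha with hz | hz | hz <;> exact absurd (hz.symm.trans h') (by decide))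

lemma shRA_stable (t : Term) (π : Stack) (n : ℕ) {W : Proc}
    (h : Step (shRA t π n) .tau W) : False := by
  obtain ⟨a, R, B, m, hmo, hmi, h1, h2⟩ := tau_decomp h
  rw [tms_shRA] at hmo hmi
  simp only [Multiset.mem_cons, Multiset.mem_singleton, RecP, ChA,
    Proc.out.injEq, Proc.inp.injEq, reduceCtorEq, false_or, or_false] at hmo hmi
  have ha : a = enterN ∨ a = initN := by
    rcases hmi with ⟨ha, _⟩ | ⟨ha, _⟩
    · exact Or.inl ha
    · exact Or.inr ha
  rcases hmo with ⟨h', _⟩ | ⟨h', _⟩ | ⟨h', _⟩ <;>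
    (rcases ha with hz | hz <;> exact absurd (hz.symm.trans h') (by decide))

lemma shRB_stable (π : Stack) (n : ℕ) {W : Proc}
    (h : Step (shRB π n) .tau W) : False := by
  obtain ⟨a, R, B, m, hmo, hmi, h1, h2⟩ := tau_decomp h
  rw [tms_shRB] at hmo hmi
  simp only [Multiset.mem_cons, Multiset.mem_singleton, RecP, ChB,
    Proc.out.injEq, Proc.inp.injEq, reduceCtorEq, false_or, or_false] at hmo hmi
  have ha : a = skipN ∨ a = initN := by
    rcases hmi with ⟨ha, _⟩ | ⟨ha, _⟩
    · exact Or.inl ha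
    · exact Or.inr ha
  rcases hmo with ⟨h', _⟩ | ⟨h', _⟩ | ⟨h', _⟩ <;>
    (rcases ha with hz | hz <;> exact absurd (hz.symm.trans h') (by decide))

end BEq8

namespace BEq8

open Proc

lemma mem_HSet_hd : hdN ∈ HSet := by simp [HSet]
lemma mem_HSet_c : cN ∈ HSet := by simp [HSet]
lemma mem_HSet_b : bN ∈ HSet := by simp [HSet]
lemma mem_HSet_k : kN ∈ HSet := by simp [HSet]
lemma mem_HSet_init : initN ∈ HSet := by simp [HSet]
lemma mem_HSet_rec : recN ∈ HSet := by simp [HSet]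
lemma mem_HSet_ch : chN ∈ HSet := by simp [HSet]

lemma skip_not_HSet : skipN ∉ HSet := by
  intro hx
  simp [HSet, skipN, hdN, cN, bN, kN, initN, recN, chN] at hx

lemma enter_not_HSet : enterN ∉ HSet := by
  intro hx
  simp [HSet, enterN, hdN, cN, bN, kN, initN, recN, chN] at hx

/-- All strong outputs of machine shapes are on hidden names. -/
lemma ssh_out_names {Z : Proc} (hss : SSh Z) {a : Name} {V W : Proc}
    (h : Step Z (.outl a V) W) : a ∈ HSet := by
  obtain ⟨R', m, h1, _, _⟩ := step_out_inv h
  have hm : Proc.out a R' ∈ tms Z := by rw [h1]; exact Multiset.mem_cons_self _ _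
  cases hss with
  | ev t π n =>
      rw [tms_shEV'] at hm
      simp only [Multiset.mem_cons, Multiset.mem_singleton, RecP,
        Proc.out.injEq, reduceCtorEq, false_or, or_false] at hm
      rcases hm with h' | ⟨h', _⟩ | ⟨h', _⟩ | ⟨h', _⟩
      · exact absurd h'.symm (trTN_ne_out t a R')
      · exact h' ▸ mem_HSet_c
      · exact h' ▸ mem_HSet_k
      · exact h' ▸ mem_HSet_rec
  | cont π n =>
      rw [tms_shCONT] at hm
      simp only [Multiset.mem_cons, Multiset.mem_singleton, RecP, ContP,
        Proc.out.injEq, reduceCtorEq, false_or, or_false] at hm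
      rcases hm with ⟨h', _⟩ | ⟨h', _⟩ | ⟨h', _⟩
      · exact h' ▸ mem_HSet_c
      · exact h' ▸ mem_HSet_k
      · exact h' ▸ mem_HSet_rec
  | l1 t π n =>
      cases π with
      | nil =>
          rw [tms_shL1_nil] at hm
          simp only [Multiset.mem_cons, Multiset.mem_singleton, RecP, H1, trMt,
            Proc.out.injEq, reduceCtorEq, false_or, or_false] at hm
          rcases hm with ⟨h', _⟩ | ⟨h', _⟩ | ⟨h', _⟩
          · exact h' ▸ mem_HSet_b
          · exact h' ▸ mem_HSet_k
          · exact h' ▸ mem_HSet_rec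
      | cons s π =>
          rw [tms_shL1_cons] at hm
          simp only [Multiset.mem_cons, Multiset.mem_singleton, RecP, H1,
            Proc.out.injEq, reduceCtorEq, false_or, or_false] at hm
          rcases hm with ⟨h', _⟩ | ⟨h', _⟩ | ⟨h', _⟩ | ⟨h', _⟩ | ⟨h', _⟩
          · exact h' ▸ mem_HSet_hd
          · exact h' ▸ mem_HSet_c
          · exact h' ▸ mem_HSet_b
          · exact h' ▸ mem_HSet_k
          · exact h' ▸ mem_HSet_rec
  | l2 t s π n =>
      rw [tms_shL2] at hm
      simp only [Multiset.mem_cons, Multiset.mem_singleton, RecP, H1b,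
        Proc.out.injEq, reduceCtorEq, false_or, or_false] at hm
      rcases hm with ⟨h', _⟩ | ⟨h', _⟩ | ⟨h', _⟩ | ⟨h', _⟩
      · exact h' ▸ mem_HSet_c
      · exact h' ▸ mem_HSet_b
      · exact h' ▸ mem_HSet_k
      · exact h' ▸ mem_HSet_rec
  | l3 t n =>
      rw [tms_shL3] at hm
      simp only [Multiset.mem_cons, Multiset.mem_singleton, RecP, H1, Restart,
        Proc.out.injEq, reduceCtorEq, false_or, or_false] at hm
      rcases hm with ⟨h', _⟩ | ⟨h', _⟩
      · exact h' ▸ mem_HSet_k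
      · exact h' ▸ mem_HSet_rec
  | c1 π n =>
      cases π with
      | nil =>
          rw [tms_shC1_nil] at hm
          simp only [Multiset.mem_cons, Multiset.mem_singleton, RecP, H2c, trMt,
            Proc.out.injEq, reduceCtorEq, false_or, or_false] at hm
          rcases hm with ⟨h', _⟩ | ⟨h', _⟩ | ⟨h', _⟩
          · exact h' ▸ mem_HSet_b
          · exact h' ▸ mem_HSet_k
          · exact h' ▸ mem_HSet_rec
      | cons s π =>
          rw [tms_shC1_cons] at hm
          simp only [Multiset.mem_cons, Multiset.mem_singleton, RecP, H2c,
            Proc.out.injEq, reduceCtorEq, false_or, or_false] at hm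
          rcases hm with ⟨h', _⟩ | ⟨h', _⟩ | ⟨h', _⟩ | ⟨h', _⟩ | ⟨h', _⟩
          · exact h' ▸ mem_HSet_hd
          · exact h' ▸ mem_HSet_c
          · exact h' ▸ mem_HSet_b
          · exact h' ▸ mem_HSet_k
          · exact h' ▸ mem_HSet_rec
  | c2 t π n =>
      rw [tms_shC2] at hm
      simp only [Multiset.mem_cons, Multiset.mem_singleton, RecP,
        Proc.out.injEq, reduceCtorEq, false_or, or_false] at hm
      rcases hm with ⟨h', _⟩ | ⟨h', _⟩ | ⟨h', _⟩ | ⟨h', _⟩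
      · exact h' ▸ mem_HSet_c
      · exact h' ▸ mem_HSet_b
      · exact h' ▸ mem_HSet_k
      · exact h' ▸ mem_HSet_rec
  | d n =>
      rw [tms_shD] at hm
      simp only [Multiset.mem_cons, Multiset.mem_singleton, RecP, H2c, doneT,
        Proc.out.injEq, reduceCtorEq, false_or, or_false] at hm
      rcases hm with ⟨h', _⟩ | ⟨h', _⟩
      · exact h' ▸ mem_HSet_k
      · exact h' ▸ mem_HSet_rec
  | ch t π n =>
      rw [tms_shCH] at hm
      simp only [Multiset.mem_cons, Multiset.mem_singleton, RecP, chRecv,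
        Proc.out.injEq, reduceCtorEq, false_or, or_false] at hm
      rcases hm with ⟨h', _⟩ | ⟨h', _⟩ | ⟨h', _⟩ | ⟨h', _⟩ | ⟨h', _⟩
      · exact h' ▸ mem_HSet_ch
      · exact h' ▸ mem_HSet_ch
      · exact h' ▸ mem_HSet_c
      · exact h' ▸ mem_HSet_k
      · exact h' ▸ mem_HSet_rec
  | cha t π n =>
      rw [tms_shCHa] at hm
      simp only [Multiset.mem_cons, Multiset.mem_singleton, RecP,
        Proc.out.injEq, reduceCtorEq, false_or, or_false] at hm
      rcases hm with ⟨h', _⟩ | ⟨h', _⟩ | ⟨h', _⟩ | ⟨h', _⟩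
      · exact h' ▸ mem_HSet_ch
      · exact h' ▸ mem_HSet_c
      · exact h' ▸ mem_HSet_k
      · exact h' ▸ mem_HSet_rec
  | chb t π n =>
      rw [tms_shCHb] at hm
      simp only [Multiset.mem_cons, Multiset.mem_singleton, RecP,
        Proc.out.injEq, reduceCtorEq, false_or, or_false] at hm
      rcases hm with ⟨h', _⟩ | ⟨h', _⟩ | ⟨h', _⟩ | ⟨h', _⟩
      · exact h' ▸ mem_HSet_ch
      · exact h' ▸ mem_HSet_c
      · exact h' ▸ mem_HSet_k
      · exact h' ▸ mem_HSet_rec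
  | ra t π n =>
      rw [tms_shRA] at hm
      simp only [Multiset.mem_cons, Multiset.mem_singleton, RecP, ChA,
        Proc.out.injEq, reduceCtorEq, false_or, or_false] at hm
      rcases hm with ⟨h', _⟩ | ⟨h', _⟩ | ⟨h', _⟩
      · exact h' ▸ mem_HSet_c
      · exact h' ▸ mem_HSet_k
      · exact h' ▸ mem_HSet_rec
  | rb π n =>
      rw [tms_shRB] at hm
      simp only [Multiset.mem_cons, Multiset.mem_singleton, RecP, ChB,
        Proc.out.injEq, reduceCtorEq, false_or, or_false] at hm
      rcases hm with ⟨h', _⟩ | ⟨h', _⟩ | ⟨h', _⟩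
      · exact h' ▸ mem_HSet_c
      · exact h' ▸ mem_HSet_k
      · exact h' ▸ mem_HSet_rec

end BEq8

namespace BEq8

open Proc

/-- Shapes with a visible (non-hidden) input are stable. -/
lemma ssh_P3 {Z : Proc} (hss : SSh Z) {a : Name} {V X2 W : Proc}
    (hstep : Step Z (.inl a V) X2) (ha : a ∉ HSet) (htau : Step Z .tau W) :
    False := by
  obtain ⟨B, m, h1, _⟩ := step_inp_inv hstep
  have hm : Proc.inp a B ∈ tms Z := by rw [h1]; exact Multiset.mem_cons_self _ _
  cases hss with
  | ev t π n =>
      cases t with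
      | fvar f => exact shEV_fvar_stable f π n htau
      | bvar j => exact shEV_bvar_stable j π n htau
      | app t s =>
          rw [tms_shEV_app] at hm
          simp only [Multiset.mem_cons, Multiset.mem_singleton, RecP,
            Proc.inp.injEq, reduceCtorEq, false_or, or_false] at hm
          rcases hm with ⟨h', _⟩ | ⟨h', _⟩
          · exact ha (h' ▸ mem_HSet_c)
          · exact ha (h' ▸ mem_HSet_init)
      | lam t =>
          rw [tms_shEV_lam] at hm
          simp only [Multiset.mem_cons, Multiset.mem_singleton, RecP,
            Proc.inp.injEq, reduceCtorEq, false_or, or_false] at hm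
          rcases hm with ⟨h', _⟩ | ⟨h', _⟩
          · exact ha (h' ▸ mem_HSet_c)
          · exact ha (h' ▸ mem_HSet_init)
  | cont π n =>
      rw [tms_shCONT] at hm
      simp only [Multiset.mem_cons, Multiset.mem_singleton, RecP, ContP,
        Proc.inp.injEq, reduceCtorEq, false_or, or_false] at hm
      rcases hm with ⟨h', _⟩ | ⟨h', _⟩
      · exact ha (h' ▸ mem_HSet_c)
      · exact ha (h' ▸ mem_HSet_init)
  | l1 t π n =>
      cases π with
      | nil =>
          rw [tms_shL1_nil] at hm
          simp only [Multiset.mem_cons, Multiset.mem_singleton, RecP, H1, trMt,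
            Proc.inp.injEq, reduceCtorEq, false_or, or_false] at hm
          rcases hm with ⟨h', _⟩ | ⟨h', _⟩ | ⟨h', _⟩
          · exact ha (h' ▸ mem_HSet_b)
          · exact ha (h' ▸ mem_HSet_hd)
          · exact ha (h' ▸ mem_HSet_init)
      | cons s π =>
          rw [tms_shL1_cons] at hm
          simp only [Multiset.mem_cons, Multiset.mem_singleton, RecP, H1,
            Proc.inp.injEq, reduceCtorEq, false_or, or_false] at hm
          rcases hm with ⟨h', _⟩ | ⟨h', _⟩
          · exact ha (h' ▸ mem_HSet_hd)
          · exact ha (h' ▸ mem_HSet_init)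
  | l2 t s π n =>
      rw [tms_shL2] at hm
      simp only [Multiset.mem_cons, Multiset.mem_singleton, RecP, H1b,
        Proc.inp.injEq, reduceCtorEq, false_or, or_false] at hm
      rcases hm with ⟨h', _⟩ | ⟨h', _⟩
      · exact ha (h' ▸ mem_HSet_b)
      · exact ha (h' ▸ mem_HSet_init)
  | l3 t n => exact shL3_stable t n htau
  | c1 π n =>
      cases π with
      | nil =>
          rw [tms_shC1_nil] at hm
          simp only [Multiset.mem_cons, Multiset.mem_singleton, RecP, H2c, trMt,
            Proc.inp.injEq, reduceCtorEq, false_or, or_false] at hm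
          rcases hm with ⟨h', _⟩ | ⟨h', _⟩ | ⟨h', _⟩
          · exact ha (h' ▸ mem_HSet_b)
          · exact ha (h' ▸ mem_HSet_hd)
          · exact ha (h' ▸ mem_HSet_init)
      | cons s π =>
          rw [tms_shC1_cons] at hm
          simp only [Multiset.mem_cons, Multiset.mem_singleton, RecP, H2c,
            Proc.inp.injEq, reduceCtorEq, false_or, or_false] at hm
          rcases hm with ⟨h', _⟩ | ⟨h', _⟩
          · exact ha (h' ▸ mem_HSet_hd)
          · exact ha (h' ▸ mem_HSet_init)
  | c2 t π n =>
      rw [tms_shC2] at hm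
      simp only [Multiset.mem_cons, Multiset.mem_singleton, RecP,
        Proc.inp.injEq, reduceCtorEq, false_or, or_false] at hm
      rcases hm with ⟨h', _⟩ | ⟨h', _⟩
      · exact ha (h' ▸ mem_HSet_b)
      · exact ha (h' ▸ mem_HSet_init)
  | d n => exact shD_stable n htau
  | ch t π n =>
      rw [tms_shCH] at hm
      simp only [Multiset.mem_cons, Multiset.mem_singleton, RecP, chRecv,
        Proc.inp.injEq, reduceCtorEq, false_or, or_false] at hm
      rcases hm with ⟨h', _⟩ | ⟨h', _⟩
      · exact ha (h' ▸ mem_HSet_ch)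
      · exact ha (h' ▸ mem_HSet_init)
  | cha t π n =>
      rw [tms_shCHa] at hm
      simp only [Multiset.mem_cons, Multiset.mem_singleton, RecP,
        Proc.inp.injEq, reduceCtorEq, false_or, or_false] at hm
      rcases hm with ⟨h', _⟩ | ⟨h', _⟩
      · exact ha (h' ▸ mem_HSet_ch)
      · exact ha (h' ▸ mem_HSet_init)
  | chb t π n =>
      rw [tms_shCHb] at hm
      simp only [Multiset.mem_cons, Multiset.mem_singleton, RecP,
        Proc.inp.injEq, reduceCtorEq, false_or, or_false] at hm
      rcases hm with ⟨h', _⟩ | ⟨h', _⟩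
      · exact ha (h' ▸ mem_HSet_ch)
      · exact ha (h' ▸ mem_HSet_init)
  | ra t π n => exact shRA_stable t π n htau
  | rb π n => exact shRB_stable π n htau

/-- Successors of shapes are shapes (up to congruence). -/
lemma ssh_tau_succ {Z : Proc} (hss : SSh Z) {W : Proc} (h : Step Z .tau W) :
    ∃ Z', SSh Z' ∧ SCong W Z' := by
  cases hss with
  | ev t π n =>
      cases t with
      | fvar f => exact absurd h (fun h' => shEV_fvar_stable f π n h')
      | bvar j => exact absurd h (fun h' => shEV_bvar_stable j π n h')
      | app t s => exact ⟨_, SSh.ev t (.cons s π) n, shEV_app_tau t s π n h⟩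
      | lam t => exact ⟨_, SSh.l1 t π n, shEV_lam_tau t π n h⟩
  | cont π n => exact ⟨_, SSh.c1 π n, shCONT_tau π n h⟩
  | l1 t π n =>
      cases π with
      | nil => exact ⟨_, SSh.l3 t n, shL1_nil_tau t n h⟩
      | cons s π => exact ⟨_, SSh.l2 t s π n, shL1_cons_tau t s π n h⟩
  | l2 t s π n => exact ⟨_, SSh.ev (t.substT 0 s) π n, shL2_tau t s π n h⟩
  | l3 t n => exact absurd h (fun h' => shL3_stable t n h')
  | c1 π n =>
      cases π with
      | nil => exact ⟨_, SSh.d n, shC1_nil_tau n h⟩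
      | cons s π => exact ⟨_, SSh.c2 s π n, shC1_cons_tau s π n h⟩
  | c2 t π n => exact ⟨_, SSh.ch t π n, shC2_tau t π n h⟩
  | d n => exact absurd h (fun h' => shD_stable n h')
  | ch t π n =>
      rcases shCH_tau t π n h with h' | h'
      · exact ⟨_, SSh.cha t π n, h'⟩
      · exact ⟨_, SSh.chb t π n, h'⟩
  | cha t π n => exact ⟨_, SSh.ra t π n, shCHa_tau t π n h⟩
  | chb t π n => exact ⟨_, SSh.rb π n, shCHb_tau t π n h⟩
  | ra t π n => exact absurd h (fun h' => shRA_stable t π n h')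
  | rb π n => exact absurd h (fun h' => shRB_stable π n h')

/-- Determinism of shapes, except at the choice. -/
lemma ssh_det {Z : Proc} (hss : SSh Z) {W1 W2 : Proc}
    (h1 : Step Z .tau W1) (h2 : Step Z .tau W2) :
    SCong W1 W2 ∨ ∃ t π n, Z = shCH t π n := by
  cases hss with
  | ev t π n =>
      cases t with
      | fvar f => exact absurd h1 (fun h' => shEV_fvar_stable f π n h')
      | bvar j => exact absurd h1 (fun h' => shEV_bvar_stable j π n h')
      | app t s => exact Or.inl ((shEV_app_tau t s π n h1).trans
          (shEV_app_tau t s π n h2).symm)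
      | lam t => exact Or.inl ((shEV_lam_tau t π n h1).trans
          (shEV_lam_tau t π n h2).symm)
  | cont π n => exact Or.inl ((shCONT_tau π n h1).trans (shCONT_tau π n h2).symm)
  | l1 t π n =>
      cases π with
      | nil => exact Or.inl ((shL1_nil_tau t n h1).trans (shL1_nil_tau t n h2).symm)
      | cons s π => exact Or.inl ((shL1_cons_tau t s π n h1).trans
          (shL1_cons_tau t s π n h2).symm)
  | l2 t s π n => exact Or.inl ((shL2_tau t s π n h1).trans (shL2_tau t s π n h2).symm)
  | l3 t n => exact absurd h1 (fun h' => shL3_stable t n h')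
  | c1 π n =>
      cases π with
      | nil => exact Or.inl ((shC1_nil_tau n h1).trans (shC1_nil_tau n h2).symm)
      | cons s π => exact Or.inl ((shC1_cons_tau s π n h1).trans
          (shC1_cons_tau s π n h2).symm)
  | c2 t π n => exact Or.inl ((shC2_tau t π n h1).trans (shC2_tau t π n h2).symm)
  | d n => exact absurd h1 (fun h' => shD_stable n h')
  | ch t π n => exact Or.inr ⟨t, π, n, rfl⟩
  | cha t π n => exact Or.inl ((shCHa_tau t π n h1).trans (shCHa_tau t π n h2).symm)
  | chb t π n => exact Or.inl ((shCHb_tau t π n h1).trans (shCHb_tau t π n h2).symm)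
  | ra t π n => exact absurd h1 (fun h' => shRA_stable t π n h')
  | rb π n => exact absurd h1 (fun h' => shRB_stable π n h')

/-! #### The state-space predicate and its properties -/

lemma SS_of_scong {X Y : Proc} (h : SCong X Y) (hss : SS Y) : SS X := by
  obtain ⟨Z, hZ, hsc⟩ := hss
  exact ⟨Z, hZ, h.trans hsc⟩

lemma P1 {X X' : Proc} (hss : SS X) (h : Step X .tau X') : SS X' := by
  obtain ⟨Z, hZ, hsc⟩ := hss
  have h' : Step Z .tau X' := step_struct hsc.symm h
  obtain ⟨Z', hZ', hsc'⟩ := ssh_tau_succ hZ h'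
  exact ⟨Z', hZ', hsc'⟩

lemma P4 {X W : Proc} (hss : SS X) {a : Name} {V : Proc}
    (h : Step X (.outl a V) W) : a ∈ HSet := by
  obtain ⟨Z, hZ, hsc⟩ := hss
  exact ssh_out_names hZ (step_struct hsc.symm h)

lemma P3 {X X2 : Proc} (hss : SS X) {a : Name} {V : Proc}
    (h : Step X (.inl a V) X2) (ha : a ∉ HSet) : ∀ W, ¬ Step X .tau W := by
  obtain ⟨Z, hZ, hsc⟩ := hss
  intro W htau
  exact ssh_P3 hZ (step_struct hsc.symm h) ha (step_struct hsc.symm htau)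

lemma trNConf_SS (C : NConf) : SS (trNConf C) := by
  cases C with
  | ev t π n => exact ⟨shEV t π n, SSh.ev t π n, SCong.refl _⟩
  | cont π n => exact ⟨shCONT π n, SSh.cont π n, SCong.refl _⟩

lemma machine_SS {P : Proc} (hP : MachineProc P) : SS P := by
  obtain ⟨C, hw⟩ := hP
  induction hw with
  | refl => exact trNConf_SS C
  | tail _ hstep ih => exact P1 ih hstep

end BEq8

namespace BEq8

open Proc

/-! #### Observables of the choice states -/

lemma hbody_ch (X : Proc) :
    (Proc.inp chN (.pvar 1)).subst 0 X = .inp chN (X.lift 1 0) := by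
  simp [Proc.subst]

lemma shCH_step_b (t : Term) (π : Stack) (n : ℕ) :
    ∃ Q, Step (shCH t π n) .tau Q ∧ SCong Q (shCHb t π n) := by
  have hX : tms (shCH t π n) = Proc.out chN ChB ::ₘ
      Proc.inp chN (.inp chN (.pvar 1)) ::ₘ
      (Proc.out chN (ChA t) ::ₘ .out cN (trStkN π) ::ₘ .out kN (trFV n) ::ₘ RecP ::ₘ
        {.out recN RecP}) := by
    rw [tms_shCH]
    rw [Multiset.cons_swap (Proc.out chN (ChA t)) (Proc.out chN ChB)]
    rw [Multiset.cons_swap (Proc.out chN (ChA t)) chRecv]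
    rfl
  obtain ⟨Q, hstep, htms⟩ := step_tau_of hX
  refine ⟨Q, hstep, scong_of_tms_eq ?_⟩
  rw [htms, hbody_ch, tms_inp, Multiset.singleton_add, tms_shCHb]

lemma shCH_step_a (t : Term) (π : Stack) (n : ℕ) :
    ∃ Q, Step (shCH t π n) .tau Q ∧ SCong Q (shCHa t π n) := by
  have hX : tms (shCH t π n) = Proc.out chN (ChA t) ::ₘ
      Proc.inp chN (.inp chN (.pvar 1)) ::ₘ
      (Proc.out chN ChB ::ₘ .out cN (trStkN π) ::ₘ .out kN (trFV n) ::ₘ RecP ::ₘ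
        {.out recN RecP}) := by
    rw [tms_shCH]
    rw [Multiset.cons_swap (Proc.out chN ChB) chRecv]
    rfl
  obtain ⟨Q, hstep, htms⟩ := step_tau_of hX
  refine ⟨Q, hstep, scong_of_tms_eq ?_⟩
  rw [htms, hbody_ch, tms_inp, Multiset.singleton_add, tms_shCHa]

lemma shCHb_step (t : Term) (π : Stack) (n : ℕ) :
    ∃ Q, Step (shCHb t π n) .tau Q ∧ SCong Q (shRB π n) := by
  have hX : tms (shCHb t π n) = Proc.out chN (ChA t) ::ₘ
      Proc.inp chN (ChB.lift 1 0) ::ₘ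
      (Proc.out cN (trStkN π) ::ₘ .out kN (trFV n) ::ₘ RecP ::ₘ
        {.out recN RecP}) := by
    rw [tms_shCHb]
    rw [Multiset.cons_swap (Proc.inp chN (ChB.lift 1 0)) (Proc.out chN (ChA t))]
  obtain ⟨Q, hstep, htms⟩ := step_tau_of hX
  refine ⟨Q, hstep, scong_of_tms_eq ?_⟩
  rw [htms, subst_lift_cancel ChB (ChA t) 0, tms_ChB, Multiset.singleton_add,
    tms_shRB]

lemma shCHa_step (t : Term) (π : Stack) (n : ℕ) :
    ∃ Q, Step (shCHa t π n) .tau Q ∧ SCong Q (shRA t π n) := by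
  have hX : tms (shCHa t π n) = Proc.out chN ChB ::ₘ
      Proc.inp chN ((ChA t).lift 1 0) ::ₘ
      (Proc.out cN (trStkN π) ::ₘ .out kN (trFV n) ::ₘ RecP ::ₘ
        {.out recN RecP}) := by
    rw [tms_shCHa]
    rw [Multiset.cons_swap (Proc.inp chN ((ChA t).lift 1 0)) (Proc.out chN ChB)]
  obtain ⟨Q, hstep, htms⟩ := step_tau_of hX
  refine ⟨Q, hstep, scong_of_tms_eq ?_⟩
  rw [htms, subst_lift_cancel (ChA t) ChB 0, tms_ChA, Multiset.singleton_add,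
    tms_shRA]

lemma shRB_barb (π : Stack) (n : ℕ) : StrongBarb HSet (shRB π n) (.inb skipN) := by
  have hX : tms (shRB π n) = Proc.inp skipN (.out initN .nil) ::ₘ
      (Proc.out cN (trStkN π) ::ₘ .out kN (trFV n) ::ₘ RecP ::ₘ
        {.out recN RecP}) := by
    rw [tms_shRB]; rfl
  obtain ⟨Q, hs, _⟩ := step_inp_of hX Proc.nil
  exact ⟨skip_not_HSet, Proc.nil, Q, hs⟩

lemma shRA_barb (t : Term) (π : Stack) (n : ℕ) :
    StrongBarb HSet (shRA t π n) (.inb enterN) := by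
  have hX : tms (shRA t π n) = Proc.inp enterN (.inp cN
      (.par ((trTN t).lift 2 0) (.out cN trMt))) ::ₘ
      (Proc.out cN (trStkN π) ::ₘ .out kN (trFV n) ::ₘ RecP ::ₘ
        {.out recN RecP}) := by
    rw [tms_shRA]; rfl
  obtain ⟨Q, hs, _⟩ := step_inp_of hX Proc.nil
  exact ⟨enter_not_HSet, Proc.nil, Q, hs⟩

lemma shCH_skip (t : Term) (π : Stack) (n : ℕ) :
    WeakBarb HSet (shCH t π n) (.inb skipN) := by
  obtain ⟨Q1, h1, hsc1⟩ := shCH_step_b t π n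
  obtain ⟨Q2, h2, hsc2⟩ := shCHb_step t π n
  refine ⟨Q2, ?_, strongbarb_scong hsc2 (shRB_barb π n)⟩
  exact Relation.ReflTransGen.head h1
    (Relation.ReflTransGen.single (step_struct hsc1 h2))

lemma shCH_enter (t : Term) (π : Stack) (n : ℕ) :
    WeakBarb HSet (shCH t π n) (.inb enterN) := by
  obtain ⟨Q1, h1, hsc1⟩ := shCH_step_a t π n
  obtain ⟨Q2, h2, hsc2⟩ := shCHa_step t π n
  refine ⟨Q2, ?_, strongbarb_scong hsc2 (shRA_barb t π n)⟩
  exact Relation.ReflTransGen.head h1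
    (Relation.ReflTransGen.single (step_struct hsc1 h2))

lemma reach_cha {X Y : Proc} (h : WTau X Y) :
    ∀ t π n, SCong X (shCHa t π n) →
      (SCong Y (shCHa t π n) ∨ SCong Y (shRA t π n)) := by
  induction h with
  | refl => exact fun t π n h' => Or.inl h'
  | tail hw hstep ih =>
      intro t π n hX
      rcases ih t π n hX with h' | h'
      · exact Or.inr (shCHa_tau t π n (step_struct h'.symm hstep))
      · exact absurd (step_struct h'.symm hstep)
          (fun hh => shRA_stable t π n hh)

lemma reach_chb {X Y : Proc} (h : WTau X Y) :
    ∀ t π n, SCong X (shCHb t π n) →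
      (SCong Y (shCHb t π n) ∨ SCong Y (shRB π n)) := by
  induction h with
  | refl => exact fun t π n h' => Or.inl h'
  | tail hw hstep ih =>
      intro t π n hX
      rcases ih t π n hX with h' | h'
      · exact Or.inr (shCHb_tau t π n (step_struct h'.symm hstep))
      · exact absurd (step_struct h'.symm hstep)
          (fun hh => shRB_stable π n hh)

lemma cha_no_skip (t : Term) (π : Stack) (n : ℕ) :
    ¬ WeakBarb HSet (shCHa t π n) (.inb skipN) := by
  rintro ⟨P'', hw, hsb⟩
  obtain ⟨ha, Q, R, hs⟩ := hsb
  rcases reach_cha hw t π n (SCong.refl _) with hsc | hsc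
  · obtain ⟨B, m, h1, _⟩ := step_inp_inv (step_struct hsc.symm hs)
    have hm : Proc.inp skipN B ∈ tms (shCHa t π n) := by
      rw [h1]; exact Multiset.mem_cons_self _ _
    rw [tms_shCHa] at hm
    simp only [Multiset.mem_cons, Multiset.mem_singleton, RecP,
      Proc.inp.injEq, reduceCtorEq, false_or, or_false] at hm
    rcases hm with ⟨h', _⟩ | ⟨h', _⟩ <;> exact absurd h' (by decide)
  · obtain ⟨B, m, h1, _⟩ := step_inp_inv (step_struct hsc.symm hs)
    have hm : Proc.inp skipN B ∈ tms (shRA t π n) := by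
      rw [h1]; exact Multiset.mem_cons_self _ _
    rw [tms_shRA] at hm
    simp only [Multiset.mem_cons, Multiset.mem_singleton, RecP, ChA,
      Proc.inp.injEq, reduceCtorEq, false_or, or_false] at hm
    rcases hm with ⟨h', _⟩ | ⟨h', _⟩ <;> exact absurd h' (by decide)

lemma chb_no_enter (t : Term) (π : Stack) (n : ℕ) :
    ¬ WeakBarb HSet (shCHb t π n) (.inb enterN) := by
  rintro ⟨P'', hw, hsb⟩
  obtain ⟨ha, Q, R, hs⟩ := hsb
  rcases reach_chb hw t π n (SCong.refl _) with hsc | hsc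
  · obtain ⟨B, m, h1, _⟩ := step_inp_inv (step_struct hsc.symm hs)
    have hm : Proc.inp enterN B ∈ tms (shCHb t π n) := by
      rw [h1]; exact Multiset.mem_cons_self _ _
    rw [tms_shCHb] at hm
    simp only [Multiset.mem_cons, Multiset.mem_singleton, RecP,
      Proc.inp.injEq, reduceCtorEq, false_or, or_false] at hm
    rcases hm with ⟨h', _⟩ | ⟨h', _⟩ <;> exact absurd h' (by decide)
  · obtain ⟨B, m, h1, _⟩ := step_inp_inv (step_struct hsc.symm hs)
    have hm : Proc.inp enterN B ∈ tms (shRB π n) := by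
      rw [h1]; exact Multiset.mem_cons_self _ _
    rw [tms_shRB] at hm
    simp only [Multiset.mem_cons, Multiset.mem_singleton, RecP, ChB,
      Proc.inp.injEq, reduceCtorEq, false_or, or_false] at hm
    rcases hm with ⟨h', _⟩ | ⟨h', _⟩ <;> exact absurd h' (by decide)

/-- Determinism of machine processes on observation-preserving steps. -/
lemma P2 {X X1 X2 : Proc} (hss : SS X) (h1 : Step X .tau X1) (h2 : Step X .tau X2)
    (hobs : WkObs X1 = WkObs X) : SCong X1 X2 := by
  obtain ⟨Z, hZ, hsc⟩ := hss
  have h1' : Step Z .tau X1 := step_struct hsc.symm h1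
  have h2' : Step Z .tau X2 := step_struct hsc.symm h2
  rcases ssh_det hZ h1' h2' with h' | ⟨t, π, n, rfl⟩
  · exact h'
  · rcases shCH_tau t π n h1' with ha1 | hb1
    · rcases shCH_tau t π n h2' with ha2 | hb2
      · exact ha1.trans ha2.symm
      · exfalso
        have hskip : Barb.inb skipN ∈ WkObs X := by
          rw [wkobs_scong hsc]
          exact shCH_skip t π n
        have h3 : Barb.inb skipN ∈ WkObs X1 := by rw [hobs]; exact hskip
        rw [wkobs_scong ha1] at h3
        exact cha_no_skip t π n h3
    · exfalso
      have henter : Barb.inb enterN ∈ WkObs X := by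
        rw [wkobs_scong hsc]
        exact shCH_enter t π n
      have h3 : Barb.inb enterN ∈ WkObs X1 := by rw [hobs]; exact henter
      rw [wkobs_scong hb1] at h3
      exact chb_no_enter t π n h3

end BEq8

namespace BEq8

open Proc

/-! #### The candidate barbed bisimulation -/

/-- Core relation between machine components. -/
def Core (X Y : Proc) : Prop :=
  SCong X Y ∨ (SS X ∧ WTau X Y ∧ WkObs X = WkObs Y) ∨
    (SS Y ∧ WTau Y X ∧ WkObs Y = WkObs X)

/-- The candidate relation: machine components related by `Core`, in parallel
with a common context avoiding the hidden names. -/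
def RR (A B : Proc) : Prop :=
  ∃ X Y S, ((S.fnames : Set Name) ∩ HSet = ∅) ∧ SCong A (.par X S) ∧
    SCong B (.par Y S) ∧ Core X Y

lemma Core.symm' {X Y : Proc} (h : Core X Y) : Core Y X := by
  rcases h with h | h | h
  · exact Or.inl h.symm
  · exact Or.inr (Or.inr h)
  · exact Or.inr (Or.inl h)

lemma RR_symm : Symmetric RR := by
  rintro A B ⟨X, Y, S, hf, hA, hB, hc⟩
  exact ⟨Y, X, S, hf, hB, hA, hc.symm'⟩

lemma fnames_nil_cond : ((Proc.nil.fnames : Set Name) ∩ HSet = ∅) := by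
  simp [Proc.fnames]

lemma RR_diag (A : Proc) : RR A A :=
  ⟨A, A, .nil, fnames_nil_cond, (SCong.parNil A).symm, (SCong.parNil A).symm,
    Or.inl (SCong.refl A)⟩

lemma inter_empty_mono {S2 S : Proc} (hsub : S2.fnames ⊆ S.fnames)
    (h : ((S.fnames : Set Name) ∩ HSet = ∅)) :
    ((S2.fnames : Set Name) ∩ HSet = ∅) := by
  rw [Set.eq_empty_iff_forall_notMem] at h ⊢
  intro x hx
  exact h x ⟨by exact_mod_cast hsub (by exact_mod_cast hx.1), hx.2⟩

lemma name_not_H {a : Name} {S : Proc} (haf : a ∈ S.fnames)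
    (h : ((S.fnames : Set Name) ∩ HSet = ∅)) : a ∉ HSet := by
  rw [Set.eq_empty_iff_forall_notMem] at h
  intro hH
  exact h a ⟨by exact_mod_cast haf, hH⟩

lemma fnames_par_cond {S S' : Proc}
    (h : ((S.fnames : Set Name) ∩ HSet = ∅))
    (h' : ((S'.fnames : Set Name) ∩ HSet = ∅)) :
    (((Proc.par S S').fnames : Set Name) ∩ HSet = ∅) := by
  rw [Set.eq_empty_iff_forall_notMem] at h h' ⊢
  intro x hx
  have hx1 : x ∈ (Proc.par S S').fnames := by exact_mod_cast hx.1
  simp only [Proc.fnames, Finset.mem_union] at hx1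
  rcases hx1 with h1 | h1
  · exact h x ⟨by exact_mod_cast h1, hx.2⟩
  · exact h' x ⟨by exact_mod_cast h1, hx.2⟩

lemma add_eq_cons_split {u v : Multiset Proc} {x : Proc} {m : Multiset Proc}
    (h : u + v = x ::ₘ m) :
    (∃ u', u = x ::ₘ u' ∧ m = u' + v) ∨ (∃ v', v = x ::ₘ v' ∧ m = u + v') := by
  have hx : x ∈ u + v := by rw [h]; exact Multiset.mem_cons_self _ _
  rcases Multiset.mem_add.1 hx with hmem | hmem
  · obtain ⟨u', rfl⟩ := Multiset.exists_cons_of_mem hmem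
    left
    refine ⟨u', rfl, ?_⟩
    rw [Multiset.cons_add] at h
    exact ((Multiset.cons_inj_right x).1 h).symm
  · obtain ⟨v', rfl⟩ := Multiset.exists_cons_of_mem hmem
    right
    refine ⟨v', rfl, ?_⟩
    rw [Multiset.add_cons] at h
    exact ((Multiset.cons_inj_right x).1 h).symm

lemma wtau_absorb {B B' M W : Proc} (h : SCong B B') (hw : WTau B' M)
    (hs : Step M .tau W) : WTau B W := by
  rcases Relation.ReflTransGen.cases_head hw with rfl | ⟨Z, h1, h2⟩
  · exact Relation.ReflTransGen.single (step_struct h hs)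
  · exact Relation.ReflTransGen.head (step_struct h h1)
      (Relation.ReflTransGen.tail h2 hs)

/-- Clause (i): barb preservation. -/
lemma RR_barb {A B : Proc} (hAB : RR A B) (α : Barb)
    (hb : StrongBarb HSet A α) : WeakBarb HSet B α := by
  obtain ⟨X, Y, S, hfS, hXA, hYB, hcore⟩ := hAB
  have weakX : WeakBarb HSet X α → WeakBarb HSet B α := by
    intro hwX
    have hwY : WeakBarb HSet Y α := by
      rcases hcore with h | ⟨_, hw, hobs⟩ | ⟨_, hw, hobs⟩
      · exact weakbarb_scong h.symm hwX
      · have : α ∈ WkObs X := hwX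
        rw [hobs] at this
        exact this
      · exact weakbarb_wtau hw hwX
    exact weakbarb_scong hYB (weakbarb_par_left S hwY)
  cases α with
  | inb a =>
      obtain ⟨haH, Q0, R0, hs⟩ := hb
      have hsP : Step (.par X S) (.inl a Q0) R0 := step_struct hXA.symm hs
      obtain ⟨B0, m, h1, _⟩ := step_inp_inv hsP
      rw [tms_par] at h1
      rcases add_eq_cons_split h1 with ⟨u', hXu, _⟩ | ⟨v', hSv, _⟩
      · obtain ⟨X2, hX2, _⟩ := step_inp_of hXu Q0
        exact weakX ⟨X, Relation.ReflTransGen.refl, haH, Q0, X2, hX2⟩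
      · obtain ⟨S2, hS2, _⟩ := step_inp_of hSv Q0
        refine weakbarb_scong hYB ⟨.par Y S, Relation.ReflTransGen.refl,
          haH, Q0, .par Y S2, Step.parR Y hS2⟩
  | outb a =>
      obtain ⟨haH, Q0, R0, hs⟩ := hb
      have hsP : Step (.par X S) (.outl a Q0) R0 := step_struct hXA.symm hs
      obtain ⟨R', m, h1, _, _⟩ := step_out_inv hsP
      rw [tms_par] at h1
      rcases add_eq_cons_split h1 with ⟨u', hXu, _⟩ | ⟨v', hSv, _⟩
      · obtain ⟨X2, hX2, _⟩ := step_out_of hXu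
        exact weakX ⟨X, Relation.ReflTransGen.refl, haH, R', X2, hX2⟩
      · obtain ⟨S2, hS2, _⟩ := step_out_of hSv
        refine weakbarb_scong hYB ⟨.par Y S, Relation.ReflTransGen.refl,
          haH, R', .par Y S2, Step.parR Y hS2⟩

/-- Clause (ii): closure under contexts. -/
lemma RR_ctx {A B : Proc} (hAB : RR A B) (S' : Proc)
    (hf : ((S'.fnames : Set Name) ∩ HSet = ∅)) :
    RR (.par A S') (.par B S') := by
  obtain ⟨X, Y, S, hfS, hXA, hYB, hcore⟩ := hAB
  refine ⟨X, Y, .par S S', fnames_par_cond hfS hf, ?_, ?_, hcore⟩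
  · exact (SCong.parCong hXA (SCong.refl S')).trans (SCong.parAssoc X S S')
  · exact (SCong.parCong hYB (SCong.refl S')).trans (SCong.parAssoc Y S S')

/-- Clause (iii): tau steps are matched. -/
lemma RR_tau {A B : Proc} (hAB : RR A B) {A' : Proc} (hstep : Step A .tau A') :
    ∃ B', WTau B B' ∧ RR A' B' := by
  obtain ⟨X, Y, S, hfS, hXA, hYB, hcore⟩ := hAB
  have hstepP : Step (.par X S) .tau A' := step_struct hXA.symm hstep
  rcases hcore with hxy | ⟨hssX, hwXY, hobsXY⟩ | ⟨hssY, hwYX, hobsYX⟩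
  · -- mirror
    have hBA : SCong B A :=
      hYB.trans ((SCong.parCong hxy.symm (SCong.refl S)).trans hXA.symm)
    exact ⟨A', Relation.ReflTransGen.single (step_struct hBA hstep), RR_diag A'⟩
  · -- Seg X Y : the hard case
    obtain ⟨a, R, B0, m, h1, h2⟩ := step_tau_inv hstepP
    rw [tms_par] at h1
    rcases add_eq_cons_split h1 with ⟨u1, hXu, hrest⟩ | ⟨v1, hSv, hrest⟩
    · -- out-thread in X
      rcases add_eq_cons_split hrest.symm with ⟨u2, hXu2, hm⟩ | ⟨v2, hSv2, hm⟩
      · -- both in X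
        have hXdec : tms X = .out a R ::ₘ .inp a B0 ::ₘ u2 := by
          rw [hXu, hXu2]
        obtain ⟨X2, hX2step, hX2tms⟩ := step_tau_of hXdec
        have hA'X2 : SCong A' (.par X2 S) := by
          refine scong_succ h2 ?_
          rw [hm, tms_par, hX2tms, add_assoc]
        rcases Relation.ReflTransGen.cases_head hwXY with rfl | ⟨X1, hstep1, hrest1⟩
        · -- Y = X : mirror
          refine ⟨A', Relation.ReflTransGen.single
            (step_struct (hYB.trans hXA.symm) hstep), RR_diag A'⟩
        · -- determinism
          have hobs1 : WkObs X1 = WkObs X := by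
            apply Set.Subset.antisymm (wkobs_mono (Relation.ReflTransGen.single hstep1))
            rw [hobsXY]
            exact wkobs_mono hrest1
          have hdet : SCong X1 X2 := P2 hssX hstep1 hX2step hobs1
          refine ⟨B, Relation.ReflTransGen.refl, X1, Y, S, hfS, ?_, hYB, ?_⟩
          · exact hA'X2.trans (SCong.parCong hdet.symm (SCong.refl S))
          · exact Or.inr (Or.inl ⟨P1 hssX hstep1, hrest1, hobs1.trans hobsXY⟩)
      · -- out in X, inp in S: impossible by P4
        exfalso
        have hmemS : Proc.inp a B0 ∈ tms S := by
          rw [hSv2]; exact Multiset.mem_cons_self _ _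
        have haS : a ∈ S.fnames := by
          have := mem_tms_fnames hmemS
          exact this (by simp [Proc.fnames])
        obtain ⟨X2, hX2step, _⟩ := step_out_of hXu
        exact name_not_H haS hfS (P4 hssX hX2step)
    · -- out-thread in S
      rcases add_eq_cons_split hrest.symm with ⟨u2, hXu2, hm⟩ | ⟨v2, hSv2, hm⟩
      · -- inp in X, out in S: X is stable, so Y = X; mirror
        have hmemS : Proc.out a R ∈ tms S := by
          rw [hSv]; exact Multiset.mem_cons_self _ _
        have haS : a ∈ S.fnames := by
          have := mem_tms_fnames hmemS
          exact this (by simp [Proc.fnames])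
        obtain ⟨X2, hX2step, _⟩ := step_inp_of hXu2 R
        have hstable := P3 hssX hX2step (name_not_H haS hfS)
        rcases Relation.ReflTransGen.cases_head hwXY with rfl | ⟨X1, hstep1, _⟩
        · exact ⟨A', Relation.ReflTransGen.single
            (step_struct (hYB.trans hXA.symm) hstep), RR_diag A'⟩
        · exact absurd hstep1 (hstable X1)
      · -- both in S
        have hSdec : tms S = .out a R ::ₘ .inp a B0 ::ₘ v2 := by
          rw [hSv, hSv2]
        obtain ⟨S2, hS2step, hS2tms⟩ := step_tau_of hSdec
        have hA'XS2 : SCong A' (.par X S2) := by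
          refine scong_succ h2 ?_
          rw [hm, tms_par, hS2tms]
          rw [add_left_comm]
        refine ⟨.par Y S2, Relation.ReflTransGen.single
          (step_struct hYB (Step.parR Y hS2step)), X, Y, S2,
          inter_empty_mono (step_tau_fnames hS2step) hfS, hA'XS2,
          SCong.refl _, Or.inr (Or.inl ⟨hssX, hwXY, hobsXY⟩)⟩
  · -- Seg Y X : B catches up and mirrors
    have hw : WTau (.par Y S) (.par X S) := wtau_par_left S hwYX
    exact ⟨A', wtau_absorb hYB hw hstepP, RR_diag A'⟩

/-- `RR` is a barbed bisimulation. -/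
lemma RR_bisim : IsBarbedBisim HSet RR := by
  refine ⟨RR_symm, ?_⟩
  intro P Q hPQ
  refine ⟨fun α hα => RR_barb hPQ α hα, fun S hS => RR_ctx hPQ S hS,
    fun P' hP' => RR_tau hPQ hP'⟩

end BEq8


/-! ### Statement 8: tau-derivatives with the same weak observables are barbed
equivalent -/

/-- If `P` and `P'` are machine processes, `P ==tau==> P'`, and `P` and `P'` have
the same weak observable actions, then `P` and `P'` are barbed equivalent
w.r.t. `H`. -/
theorem wtau_same_observables_barbed_equiv (P P' : Proc)
    (hP : MachineProc P) (hP' : MachineProc P')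
    (h : WTau P P') (hobs : WkObs P = WkObs P') :
    BarbedEquiv HSet P P' := by
  refine ⟨BEq8.RR, BEq8.RR_bisim, ?_⟩
  exact ⟨P, P', .nil, BEq8.fnames_nil_cond, (SCong.parNil P).symm,
    (SCong.parNil P').symm, Or.inr (Or.inl ⟨BEq8.machine_SS hP, h, hobs⟩)⟩
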